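/- arXiv:1804.05920 — 11 statements merged into one kernel-verified Lean document; each statement's English description precedes it below -/
import Mathlib

section
/- Let G be a group with finite symmetric generating sets S and S', and let Φ be a uniformly continuous action of G on a metric space (X,d). Then Φ is chain transitive with respect to S if and only if Φ is chain transitive with respect to S', and the chain recurrent sets coincide: CR^S(Φ) = CR^{S'}(Φ). -/
/-- `f : G → X` is a `δ`-pseudo orbit of the action `Φ` with respect to
the generating set `S`. -/
def IsPseudoOrbit {G X : Type*} [Group G] [MetricSpace X]
    (Φ : G → X → X) (S : Finset G) (δ : ℝ) (f : G → X) : Prop :=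
  ∀ s ∈ S, ∀ g : G, dist (Φ s (f g)) (f (s * g)) < δ

/-- `x R^S_δ y` : there is a `δ`-pseudo orbit of `Φ` passing through `x` and `y`
at distinct group elements. -/
def RelDelta {G X : Type*} [Group G] [MetricSpace X]
    (Φ : G → X → X) (S : Finset G) (δ : ℝ) (x y : X) : Prop :=
  ∃ f : G → X, IsPseudoOrbit Φ S δ f ∧ ∃ h k : G, h ≠ k ∧ f h = x ∧ f k = y

/-- `x R^S y` : `x R^S_δ y` for every `δ > 0`. -/
def ChainRel {G X : Type*} [Group G] [MetricSpace X]
    (Φ : G → X → X) (S : Finset G) (x y : X) : Prop :=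
  ∀ δ : ℝ, 0 < δ → RelDelta Φ S δ x y

/-- `Φ` is chain transitive with respect to `S`. -/
def ChainTransitive {G X : Type*} [Group G] [MetricSpace X]
    (Φ : G → X → X) (S : Finset G) : Prop :=
  ∀ x y : X, ChainRel Φ S x y

/-- The chain recurrent set `CR^S(Φ)`. -/
def ChainRecurrentSet {G X : Type*} [Group G] [MetricSpace X]
    (Φ : G → X → X) (S : Finset G) : Set X :=
  {x | ChainRel Φ S x x}

lemma IsPseudoOrbit.mono {G X : Type*} [Group G] [MetricSpace X]
    {Φ : G → X → X} {S : Finset G} {δ δ' : ℝ} {f : G → X}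
    (h : IsPseudoOrbit Φ S δ f) (hle : δ ≤ δ') : IsPseudoOrbit Φ S δ' f :=
  fun s hs g => lt_of_lt_of_le (h s hs g) hle

lemma key_lemma {G X : Type*} [Group G] [MetricSpace X] (Φ : G → X → X)
    (S : Finset G)
    (hSsymm : ∀ s ∈ S, s⁻¹ ∈ S)
    (hSgen : Subgroup.closure (S : Set G) = ⊤)
    (hΦ1 : ∀ x : X, Φ 1 x = x)
    (hΦmul : ∀ g h : G, ∀ x : X, Φ (g * h) x = Φ g (Φ h x))
    (hΦuc : ∀ g : G, UniformContinuous (Φ g)) (g : G) :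
    ∀ ε : ℝ, 0 < ε → ∃ δ : ℝ, 0 < δ ∧
      ∀ f : G → X, IsPseudoOrbit Φ S δ f → ∀ a : G,
        dist (Φ g (f a)) (f (g * a)) < ε := by
  have hg : g ∈ Subgroup.closure (S : Set G) := by rw [hSgen]; trivial
  induction hg using Subgroup.closure_induction with
  | mem s hs =>
    intro ε hε
    exact ⟨ε, hε, fun f hf a => hf s hs a⟩
  | one =>
    intro ε hε
    refine ⟨ε, hε, fun f hf a => ?_⟩
    simp [hΦ1, hε]
  | mul g₁ g₂ _ _ ih₁ ih₂ =>
    intro ε hε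
    obtain ⟨ε₁, hε₁, hcont⟩ := Metric.uniformContinuous_iff.mp (hΦuc g₁) (ε / 2) (by linarith)
    obtain ⟨δ₁, hδ₁, H₁⟩ := ih₁ (ε / 2) (by linarith)
    obtain ⟨δ₂, hδ₂, H₂⟩ := ih₂ ε₁ hε₁
    refine ⟨min δ₁ δ₂, lt_min hδ₁ hδ₂, fun f hf a => ?_⟩
    have hf₁ := hf.mono (min_le_left δ₁ δ₂)
    have hf₂ := hf.mono (min_le_right δ₁ δ₂)
    have h2 : dist (Φ g₂ (f a)) (f (g₂ * a)) < ε₁ := H₂ f hf₂ a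
    have h2' : dist (Φ g₁ (Φ g₂ (f a))) (Φ g₁ (f (g₂ * a))) < ε / 2 := hcont h2
    have h1 : dist (Φ g₁ (f (g₂ * a))) (f (g₁ * (g₂ * a))) < ε / 2 := H₁ f hf₁ (g₂ * a)
    calc dist (Φ (g₁ * g₂) (f a)) (f (g₁ * g₂ * a))
        = dist (Φ g₁ (Φ g₂ (f a))) (f (g₁ * (g₂ * a))) := by rw [hΦmul, mul_assoc]
      _ ≤ dist (Φ g₁ (Φ g₂ (f a))) (Φ g₁ (f (g₂ * a)))
          + dist (Φ g₁ (f (g₂ * a))) (f (g₁ * (g₂ * a))) := dist_triangle _ _ _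
      _ < ε / 2 + ε / 2 := add_lt_add h2' h1
      _ = ε := by ring
  | inv g₀ _ ih =>
    intro ε hε
    obtain ⟨ε', hε', hcont⟩ := Metric.uniformContinuous_iff.mp (hΦuc g₀⁻¹) ε hε
    obtain ⟨δ, hδ, H⟩ := ih ε' hε'
    refine ⟨δ, hδ, fun f hf a => ?_⟩
    have h1 : dist (Φ g₀ (f (g₀⁻¹ * a))) (f a) < ε' := by
      have := H f hf (g₀⁻¹ * a)
      rwa [mul_inv_cancel_left] at this
    have h2 := hcont h1
    have hid : Φ g₀⁻¹ (Φ g₀ (f (g₀⁻¹ * a))) = f (g₀⁻¹ * a) := by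
      rw [← hΦmul, inv_mul_cancel, hΦ1]
    rw [hid] at h2
    rw [dist_comm] at h2
    exact h2

lemma exists_uniform_delta {G X : Type*} [Group G] [MetricSpace X] (Φ : G → X → X)
    (S : Finset G)
    (hSsymm : ∀ s ∈ S, s⁻¹ ∈ S)
    (hSgen : Subgroup.closure (S : Set G) = ⊤)
    (hΦ1 : ∀ x : X, Φ 1 x = x)
    (hΦmul : ∀ g h : G, ∀ x : X, Φ (g * h) x = Φ g (Φ h x))
    (hΦuc : ∀ g : G, UniformContinuous (Φ g))
    (T : Finset G) (ε : ℝ) (hε : 0 < ε) :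
    ∃ δ : ℝ, 0 < δ ∧ ∀ f : G → X, IsPseudoOrbit Φ S δ f →
      ∀ t ∈ T, ∀ a : G, dist (Φ t (f a)) (f (t * a)) < ε := by
  classical
  induction T using Finset.induction_on with
  | empty => exact ⟨1, one_pos, fun f _ t ht => absurd ht (Finset.notMem_empty t)⟩
  | @insert t T' htT' ih =>
    obtain ⟨δ₁, hδ₁, H₁⟩ := key_lemma Φ S hSsymm hSgen hΦ1 hΦmul hΦuc t ε hε
    obtain ⟨δ₂, hδ₂, H₂⟩ := ih
    refine ⟨min δ₁ δ₂, lt_min hδ₁ hδ₂, fun f hf u hu a => ?_⟩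
    rcases Finset.mem_insert.mp hu with rfl | hu'
    · exact H₁ f (hf.mono (min_le_left _ _)) a
    · exact H₂ f (hf.mono (min_le_right _ _)) u hu' a

lemma chainRel_mono {G X : Type*} [Group G] [MetricSpace X] (Φ : G → X → X)
    (S S' : Finset G)
    (hSsymm : ∀ s ∈ S, s⁻¹ ∈ S)
    (hSgen : Subgroup.closure (S : Set G) = ⊤)
    (hΦ1 : ∀ x : X, Φ 1 x = x)
    (hΦmul : ∀ g h : G, ∀ x : X, Φ (g * h) x = Φ g (Φ h x))
    (hΦuc : ∀ g : G, UniformContinuous (Φ g))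
    {x y : X} (h : ChainRel Φ S x y) : ChainRel Φ S' x y := by
  intro ε hε
  obtain ⟨δ, hδ, H⟩ := exists_uniform_delta Φ S hSsymm hSgen hΦ1 hΦmul hΦuc S' ε hε
  obtain ⟨f, hf, hk⟩ := h δ hδ
  exact ⟨f, fun s hs a => H f hf s hs a, hk⟩


/-- Chain transitivity and the chain recurrent set are independent of the
finite symmetric generating set. -/
theorem chainTransitive_and_CR_independent_of_generating_set
    {G X : Type*} [Group G] [MetricSpace X] (Φ : G → X → X)
    (S S' : Finset G)
    (hSsymm : ∀ s ∈ S, s⁻¹ ∈ S)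
    (hSgen : Subgroup.closure (S : Set G) = ⊤)
    (hS'symm : ∀ s ∈ S', s⁻¹ ∈ S')
    (hS'gen : Subgroup.closure (S' : Set G) = ⊤)
    (hΦ1 : ∀ x : X, Φ 1 x = x)
    (hΦmul : ∀ g h : G, ∀ x : X, Φ (g * h) x = Φ g (Φ h x))
    (hΦuc : ∀ g : G, UniformContinuous (Φ g)) :
    (ChainTransitive Φ S ↔ ChainTransitive Φ S') ∧
      ChainRecurrentSet Φ S = ChainRecurrentSet Φ S' := by
  have h1 : ∀ x y : X, ChainRel Φ S x y → ChainRel Φ S' x y :=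
    fun x y h => chainRel_mono Φ S S' hSsymm hSgen hΦ1 hΦmul hΦuc h
  have h2 : ∀ x y : X, ChainRel Φ S' x y → ChainRel Φ S x y :=
    fun x y h => chainRel_mono Φ S' S hS'symm hS'gen hΦ1 hΦmul hΦuc h
  refine ⟨⟨fun h x y => h1 x y (h x y), fun h x y => h2 x y (h x y)⟩, ?_⟩
  ext x
  exact ⟨fun h => h1 x x h, fun h => h2 x x h⟩
end

section
/- Let G be a group with a finite symmetric generating set S, let Φ be a uniformly continuous action of G on a metric space (X,d), and let Ψ be a uniformly continuous action of G on a metric space (Y,p). Suppose h : X → Y is a uniform conjugacy between Φ and Ψ, i.e. a uniform equivalence with h ∘ Φ_g = Ψ_g ∘ h for all g ∈ G. Then Φ is chain transitive with respect to S if and only if Ψ is chain transitive with respect to S. -/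
lemma chainTransitive_of_uniform_conjugacy_aux
    {G X Y : Type*} [Group G] [MetricSpace X] [MetricSpace Y]
    (Φ : G → X → X) (Ψ : G → Y → Y) (S : Finset G)
    (h : X ≃ Y) (huc : UniformContinuous h)
    (hconj : ∀ g : G, ∀ x : X, h (Φ g x) = Ψ g (h x))
    (hΦ : ChainTransitive Φ S) : ChainTransitive Ψ S := by
  intro y1 y2 δ hδ
  obtain ⟨ε, hε, hεd⟩ := Metric.uniformContinuous_iff.mp huc δ hδ
  obtain ⟨f, hf, a, b, hab, hfa, hfb⟩ := hΦ (h.symm y1) (h.symm y2) ε hε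
  refine ⟨h ∘ f, ?_, a, b, hab, by simp [Function.comp, hfa], by simp [Function.comp, hfb]⟩
  intro s hs g
  have := hf s hs g
  simp only [Function.comp]
  rw [← hconj]
  exact hεd this

/-- Chain transitivity is invariant under uniform conjugacy. -/
theorem chainTransitive_iff_of_uniform_conjugacy
    {G X Y : Type*} [Group G] [MetricSpace X] [MetricSpace Y]
    (Φ : G → X → X) (Ψ : G → Y → Y) (S : Finset G)
    (hSsymm : ∀ s ∈ S, s⁻¹ ∈ S)
    (hSgen : Subgroup.closure (S : Set G) = ⊤)
    (hΦ1 : ∀ x : X, Φ 1 x = x)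
    (hΦmul : ∀ g h : G, ∀ x : X, Φ (g * h) x = Φ g (Φ h x))
    (hΦuc : ∀ g : G, UniformContinuous (Φ g))
    (hΨ1 : ∀ y : Y, Ψ 1 y = y)
    (hΨmul : ∀ g h : G, ∀ y : Y, Ψ (g * h) y = Ψ g (Ψ h y))
    (hΨuc : ∀ g : G, UniformContinuous (Ψ g))
    (h : X ≃ Y)
    (huc : UniformContinuous h)
    (huc' : UniformContinuous h.symm)
    (hconj : ∀ g : G, ∀ x : X, h (Φ g x) = Ψ g (h x)) :
    ChainTransitive Φ S ↔ ChainTransitive Ψ S := by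
  constructor
  · exact chainTransitive_of_uniform_conjugacy_aux Φ Ψ S h huc hconj
  · refine chainTransitive_of_uniform_conjugacy_aux Ψ Φ S h.symm huc' ?_
    intro g y
    have := hconj g (h.symm y)
    simp only [Equiv.apply_symm_apply] at this
    rw [← this, Equiv.symm_apply_apply]
end

section
/- Let G be a group with a finite symmetric generating set S and let Φ be a uniformly continuous action of G on a metric space (X,d). If Φ is commutative, then the chain recurrent set CR^S(Φ) is Φ-invariant, i.e. Φ_g(CR^S(Φ)) ⊆ CR^S(Φ) for all g ∈ G; moreover Φ_p(CR^S(Φ)) = CR^S(Φ) for every p ∈ S. -/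
/-- For a commutative uniformly continuous action, the chain recurrent set is
`Φ`-invariant, and `Φ_p(CR(Φ)) = CR(Φ)` for every generator `p ∈ S`. -/
theorem chainRecurrentSet_invariant_of_commutative
    {G X : Type*} [Group G] [MetricSpace X] (Φ : G → X → X) (S : Finset G)
    (hSsymm : ∀ s ∈ S, s⁻¹ ∈ S)
    (hSgen : Subgroup.closure (S : Set G) = ⊤)
    (hΦ1 : ∀ x : X, Φ 1 x = x)
    (hΦmul : ∀ g h : G, ∀ x : X, Φ (g * h) x = Φ g (Φ h x))
    (hΦuc : ∀ g : G, UniformContinuous (Φ g))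
    (hcomm : ∀ s ∈ S, ∀ s' ∈ S, ∀ x : X, Φ s (Φ s' x) = Φ s' (Φ s x)) :
    (∀ g : G, Φ g '' ChainRecurrentSet Φ S ⊆ ChainRecurrentSet Φ S) ∧
      ∀ p ∈ S, Φ p '' ChainRecurrentSet Φ S = ChainRecurrentSet Φ S := by
  -- Step 1: generators preserve CR
  have key : ∀ p ∈ S, ∀ x ∈ ChainRecurrentSet Φ S, Φ p x ∈ ChainRecurrentSet Φ S := by
    intro p hp x hx δ hδ
    obtain ⟨δ', hδ', hd⟩ := Metric.uniformContinuous_iff.mp (hΦuc p) δ hδ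
    obtain ⟨f, hf, h, k, hhk, hfh, hfk⟩ := hx δ' hδ'
    refine ⟨fun g => Φ p (f g), ?_, h, k, hhk, by simp [hfh], by simp [hfk]⟩
    intro s hs g
    rw [hcomm s hs p hp]
    exact hd (hf s hs g)
  -- Step 2: submonoid closure of S is everything
  have hmon : Submonoid.closure (S : Set G) = ⊤ := by
    have h1 : Submonoid.closure ((S : Set G) ∪ (S : Set G)⁻¹) = ⊤ := by
      rw [← Subgroup.closure_toSubmonoid, hSgen]; rfl
    have h2 : ((S : Set G) ∪ (S : Set G)⁻¹) ⊆ (S : Set G) := by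
      rintro x (hx | hx)
      · exact hx
      · simpa using hSsymm x⁻¹ (by simpa using hx)
    exact top_le_iff.mp (h1 ▸ Submonoid.closure_mono h2)
  have inv : ∀ g : G, ∀ x ∈ ChainRecurrentSet Φ S, Φ g x ∈ ChainRecurrentSet Φ S := by
    intro g
    have hg : g ∈ Submonoid.closure (S : Set G) := by rw [hmon]; trivial
    induction hg using Submonoid.closure_induction with
    | mem s hs => exact key s hs
    | one => intro x hx; rw [hΦ1]; exact hx
    | mul a b _ _ ha hb => intro x hx; rw [hΦmul]; exact ha _ (hb _ hx)
  constructor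
  · rintro g _ ⟨x, hx, rfl⟩
    exact inv g x hx
  · intro p hp
    apply Set.Subset.antisymm
    · rintro _ ⟨x, hx, rfl⟩; exact inv p x hx
    · intro x hx
      refine ⟨Φ p⁻¹ x, inv p⁻¹ x hx, ?_⟩
      rw [← hΦmul, mul_inv_cancel, hΦ1]
end

section
/- Let X be a compact metric space, G a group with a finite symmetric generating set S, and Φ a continuous commutative expansive action of G on X such that the restricted action Φ|_{CR^S(Φ)} has the shadowing property with respect to S. Then CR^S(Φ) is isolated: there exists a closed neighbourhood U of CR^S(Φ) in X such that ⋂_{g∈G} Φ_g(U) = CR^S(Φ). -/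
/-- `Φ` is expansive: some `c > 0` separates every pair of distinct points
along the action. -/
def Expansive {G X : Type*} [Group G] [MetricSpace X] (Φ : G → X → X) : Prop :=
  ∃ c : ℝ, 0 < c ∧ ∀ x y : X, x ≠ y → ∃ g : G, dist (Φ g x) (Φ g y) > c


section Aux

variable {G X : Type*} [Group G] [MetricSpace X]

/-- common uniform-continuity modulus for finitely many maps -/
lemma exists_unif_mod [CompactSpace X] (Φ : G → X → X) (hΦc : ∀ g : G, Continuous (Φ g))
    (S : Finset G) {r : ℝ} (hr : 0 < r) :
    ∃ β : ℝ, 0 < β ∧ ∀ s ∈ S, ∀ a b : X, dist a b < β → dist (Φ s a) (Φ s b) < r := by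
  classical
  induction S using Finset.induction_on with
  | empty => exact ⟨1, one_pos, by simp⟩
  | @insert s S hs ih =>
    obtain ⟨β, hβ, hmod⟩ := ih
    obtain ⟨γ, hγ, hmods⟩ := Metric.uniformContinuous_iff.mp
      (CompactSpace.uniformContinuous_of_continuous (hΦc s)) r hr
    refine ⟨min β γ, lt_min hβ hγ, ?_⟩
    intro t ht a b hab
    rcases Finset.mem_insert.mp ht with rfl | ht
    · exact hmods (lt_of_lt_of_le hab (min_le_right _ _))
    · exact hmod t ht a b (lt_of_lt_of_le hab (min_le_left _ _))

lemma cr_gen_invariant [CompactSpace X] (Φ : G → X → X) (S : Finset G)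
    (hΦc : ∀ g : G, Continuous (Φ g))
    (hcomm : ∀ s ∈ S, ∀ s' ∈ S, ∀ x : X, Φ s (Φ s' x) = Φ s' (Φ s x))
    {s : G} (hsS : s ∈ S) {x : X} (hx : x ∈ ChainRecurrentSet Φ S) :
    Φ s x ∈ ChainRecurrentSet Φ S := by
  intro δ hδ
  obtain ⟨η, hη, hmod⟩ := Metric.uniformContinuous_iff.mp
    (CompactSpace.uniformContinuous_of_continuous (hΦc s)) δ hδ
  obtain ⟨f, hf, h, k, hhk, hfh, hfk⟩ := hx η hη
  refine ⟨fun g => Φ s (f g), ?_, h, k, hhk, by dsimp only; rw [hfh], by dsimp only; rw [hfk]⟩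
  intro s' hs' g
  rw [hcomm s' hs' s hsS]
  exact hmod (hf s' hs' g)

lemma cr_invariant [CompactSpace X] (Φ : G → X → X) (S : Finset G)
    (hSsymm : ∀ s ∈ S, s⁻¹ ∈ S)
    (hSgen : Subgroup.closure (S : Set G) = ⊤)
    (hΦ1 : ∀ x : X, Φ 1 x = x)
    (hΦmul : ∀ g h : G, ∀ x : X, Φ (g * h) x = Φ g (Φ h x))
    (hΦc : ∀ g : G, Continuous (Φ g))
    (hcomm : ∀ s ∈ S, ∀ s' ∈ S, ∀ x : X, Φ s (Φ s' x) = Φ s' (Φ s x)) :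
    ∀ g : G, ∀ x ∈ ChainRecurrentSet Φ S, Φ g x ∈ ChainRecurrentSet Φ S := by
  classical
  let M : Submonoid G :=
    { carrier := {g | ∀ x ∈ ChainRecurrentSet Φ S, Φ g x ∈ ChainRecurrentSet Φ S}
      one_mem' := by intro x hx; rw [hΦ1]; exact hx
      mul_mem' := by
        intro a b ha hb x hx
        rw [hΦmul]
        exact ha _ (hb _ hx) }
  have hunion : (S : Set G) ∪ (S : Set G)⁻¹ = (S : Set G) := by
    apply Set.union_eq_self_of_subset_right
    intro a ha
    rw [Set.mem_inv] at ha
    simpa using hSsymm _ ha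
  intro g
  have hg : g ∈ (Subgroup.closure (S : Set G)).toSubmonoid := by
    rw [hSgen]; trivial
  rw [Subgroup.closure_toSubmonoid, hunion] at hg
  have hSM : (S : Set G) ⊆ (M : Set G) := by
    intro s hs
    show ∀ x ∈ ChainRecurrentSet Φ S, Φ s x ∈ ChainRecurrentSet Φ S
    exact fun x hx => cr_gen_invariant Φ S hΦc hcomm hs hx
  have hgM : g ∈ M := Submonoid.closure_le.mpr hSM hg
  exact hgM

end Aux
/-- If `Φ` is a commutative expansive continuous action on a compact metric
space whose restriction to the chain recurrent set has the shadowing property,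
then the chain recurrent set is isolated: it has a closed neighbourhood `U`
with `⋂_{g ∈ G} Φ_g(U) = CR(Φ)`. -/
theorem chainRecurrentSet_isolated
    {G X : Type*} [Group G] [MetricSpace X] [CompactSpace X]
    (Φ : G → X → X) (S : Finset G)
    (hSsymm : ∀ s ∈ S, s⁻¹ ∈ S)
    (hSgen : Subgroup.closure (S : Set G) = ⊤)
    (hΦ1 : ∀ x : X, Φ 1 x = x)
    (hΦmul : ∀ g h : G, ∀ x : X, Φ (g * h) x = Φ g (Φ h x))
    (hΦc : ∀ g : G, Continuous (Φ g))
    (hcomm : ∀ s ∈ S, ∀ s' ∈ S, ∀ x : X, Φ s (Φ s' x) = Φ s' (Φ s x))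
    (hexp : Expansive Φ)
    (hshad : ∀ ε : ℝ, 0 < ε → ∃ δ : ℝ, 0 < δ ∧
      ∀ f : G → X, (∀ g : G, f g ∈ ChainRecurrentSet Φ S) →
        IsPseudoOrbit Φ S δ f →
        ∃ x ∈ ChainRecurrentSet Φ S, ∀ g : G, dist (Φ g x) (f g) < ε) :
    ∃ U : Set X, IsClosed U ∧ ChainRecurrentSet Φ S ⊆ interior U ∧
      (⋂ g : G, Φ g '' U) = ChainRecurrentSet Φ S := by
  classical
  rcases Set.eq_empty_or_nonempty (ChainRecurrentSet Φ S) with hA | hA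
  · refine ⟨∅, isClosed_empty, by simp [hA], ?_⟩
    rw [hA]
    ext x
    simp only [Set.mem_iInter, Set.image_empty, Set.mem_empty_iff_false, iff_false, not_forall]
    exact ⟨1, fun h => h⟩
  · obtain ⟨c, hc, hexp'⟩ := hexp
    set A := ChainRecurrentSet Φ S with hAdef
    have hε : (0:ℝ) < c/3 := by linarith
    obtain ⟨δ, hδ, hδshad⟩ := hshad (c/3) hε
    obtain ⟨β, hβ, hmod⟩ := exists_unif_mod Φ hΦc S (half_pos hδ)
    set α : ℝ := min (β/2) (min (δ/5) (c/3)) with hαdef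
    have hα : 0 < α := by
      apply lt_min (by linarith)
      exact lt_min (by linarith) (by linarith)
    have hαβ : 2*α ≤ β := by
      have := min_le_left (β/2) (min (δ/5) (c/3)); linarith
    have hαδ : 2*α ≤ 2*(δ/5) := by
      have h1 := min_le_right (β/2) (min (δ/5) (c/3))
      have h2 := min_le_left (δ/5) (c/3); linarith
    have hαc : α ≤ c/3 := by
      have h1 := min_le_right (β/2) (min (δ/5) (c/3))
      have h2 := min_le_right (δ/5) (c/3); linarith
    set U : Set X := {y | Metric.infDist y A ≤ α} with hUdef
    have hUclosed : IsClosed U :=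
      isClosed_le (Metric.continuous_infDist_pt A) continuous_const
    have hAU : A ⊆ U := by
      intro y hy
      show Metric.infDist y A ≤ α
      rw [Metric.infDist_zero_of_mem hy]; exact le_of_lt hα
    have hAint : A ⊆ interior U := by
      have hopen : IsOpen {y | Metric.infDist y A < α} :=
        isOpen_lt (Metric.continuous_infDist_pt A) continuous_const
      have hsub : {y | Metric.infDist y A < α} ⊆ U := by
        intro y hy
        show Metric.infDist y A ≤ α
        exact le_of_lt (by exact hy)
      intro y hy
      apply interior_maximal hsub hopen
      show Metric.infDist y A < α
      rw [Metric.infDist_zero_of_mem hy]; exact hα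
    have hinv := cr_invariant Φ S hSsymm hSgen hΦ1 hΦmul hΦc hcomm
    refine ⟨U, hUclosed, hAint, ?_⟩
    apply Set.Subset.antisymm
    · intro x hx
      have horb : ∀ g : G, Φ g x ∈ U := by
        intro g
        obtain ⟨u, hu, hux⟩ := Set.mem_iInter.mp hx g⁻¹
        have : Φ g x = u := by
          rw [← hux, ← hΦmul, mul_inv_cancel, hΦ1]
        rwa [this]
      have hp : ∀ g : G, ∃ p ∈ A, dist (Φ g x) p < 2*α := by
        intro g
        apply (Metric.infDist_lt_iff hA).mp
        have := horb g
        have h2 : Metric.infDist (Φ g x) A ≤ α := this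
        linarith
      choose p hpA hpd using hp
      have hpo : IsPseudoOrbit Φ S δ p := by
        intro s hs g
        have h1 : dist (Φ s (p g)) (Φ s (Φ g x)) < δ/2 := by
          apply hmod s hs
          rw [dist_comm]
          exact lt_of_lt_of_le (hpd g) hαβ
        have h2 : dist (Φ s (Φ g x)) (p (s*g)) < 2*α := by
          rw [← hΦmul]; exact hpd (s*g)
        calc dist (Φ s (p g)) (p (s*g))
            ≤ dist (Φ s (p g)) (Φ s (Φ g x)) + dist (Φ s (Φ g x)) (p (s*g)) :=
              dist_triangle _ _ _
          _ < δ/2 + 2*α := by linarith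
          _ ≤ δ := by linarith
      obtain ⟨z, hzA, hz⟩ := hδshad p hpA hpo
      have hclose : ∀ g : G, dist (Φ g x) (Φ g z) < c := by
        intro g
        have h1 := hpd g
        have h2 := hz g
        calc dist (Φ g x) (Φ g z)
            ≤ dist (Φ g x) (p g) + dist (p g) (Φ g z) := dist_triangle _ _ _
          _ < 2*α + c/3 := by rw [dist_comm (p g)]; linarith
          _ ≤ c := by linarith
      by_contra hxA
      have hne : x ≠ z := fun h => hxA (h ▸ hzA)
      obtain ⟨g, hg⟩ := hexp' x z hne
      exact absurd (hclose g) (not_lt.mpr (le_of_lt hg))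
    · intro x hx
      apply Set.mem_iInter.mpr
      intro g
      exact ⟨Φ g⁻¹ x, hAU (hinv g⁻¹ x hx), by rw [← hΦmul, mul_inv_cancel, hΦ1]⟩
end

section
/- Let X be a compact metric space, G a group with a finite symmetric generating set S, and Φ a continuous action of G on X. Then the following are equivalent: (i) Φ is expansive; (ii) Φ admits a generator; (iii) Φ admits a weak generator. -/
/-- A finite open cover `Λ` of `X` is a generator for `Φ` if for every family
`{U_g}_{g ∈ G}` of members of `Λ`, the set `⋂_{g ∈ G} Φ_{g⁻¹}(closure U_g)`
contains at most one point. -/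
def IsGenerator {G X : Type*} [Group G] [MetricSpace X]
    (Φ : G → X → X) (Λ : Finset (Set X)) : Prop :=
  (∀ U ∈ Λ, IsOpen U) ∧ ⋃₀ (Λ : Set (Set X)) = Set.univ ∧
    ∀ U : G → Set X, (∀ g : G, U g ∈ Λ) →
      Set.Subsingleton (⋂ g : G, Φ g⁻¹ '' closure (U g))

/-- A finite open cover `Λ` of `X` is a weak generator for `Φ` if for every
family `{U_g}_{g ∈ G}` of members of `Λ`, the set `⋂_{g ∈ G} Φ_{g⁻¹}(U_g)`
contains at most one point. -/
def IsWeakGenerator {G X : Type*} [Group G] [MetricSpace X]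
    (Φ : G → X → X) (Λ : Finset (Set X)) : Prop :=
  (∀ U ∈ Λ, IsOpen U) ∧ ⋃₀ (Λ : Set (Set X)) = Set.univ ∧
    ∀ U : G → Set X, (∀ g : G, U g ∈ Λ) →
      Set.Subsingleton (⋂ g : G, Φ g⁻¹ '' U g)

/-- For a continuous action on a compact metric space, expansivity, existence
of a generator, and existence of a weak generator are equivalent. -/
theorem expansive_iff_generator_iff_weakGenerator
    {G X : Type*} [Group G] [MetricSpace X] [CompactSpace X]
    (Φ : G → X → X) (S : Finset G)
    (hSsymm : ∀ s ∈ S, s⁻¹ ∈ S)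
    (hSgen : Subgroup.closure (S : Set G) = ⊤)
    (hΦ1 : ∀ x : X, Φ 1 x = x)
    (hΦmul : ∀ g h : G, ∀ x : X, Φ (g * h) x = Φ g (Φ h x))
    (hΦc : ∀ g : G, Continuous (Φ g)) :
    (Expansive Φ ↔ ∃ Λ : Finset (Set X), IsGenerator Φ Λ) ∧
      ((∃ Λ : Finset (Set X), IsGenerator Φ Λ) ↔
        ∃ Λ : Finset (Set X), IsWeakGenerator Φ Λ) := by
  classical
  have hid : ∀ (g : G) (x : X), Φ g⁻¹ (Φ g x) = x := fun g x => by
    rw [← hΦmul, inv_mul_cancel, hΦ1]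
  have hid' : ∀ (g : G) (x : X), Φ g (Φ g⁻¹ x) = x := fun g x => by
    rw [← hΦmul, mul_inv_cancel, hΦ1]
  have hmem : ∀ (g : G) (A : Set X) (x : X), x ∈ Φ g⁻¹ '' A ↔ Φ g x ∈ A := by
    intro g A x
    constructor
    · rintro ⟨z, hz, rfl⟩; rwa [hid']
    · intro h; exact ⟨Φ g x, h, hid g x⟩
  -- Expansive → Generator
  have eg : Expansive Φ → ∃ Λ : Finset (Set X), IsGenerator Φ Λ := by
    rintro ⟨c, hc, hexp⟩
    obtain ⟨t, ht⟩ := IsCompact.elim_finite_subcover (isCompact_univ (X := X))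
      (fun x : X => Metric.ball x (c / 4)) (fun x => Metric.isOpen_ball)
      (fun x _ => Set.mem_iUnion.2 ⟨x, Metric.mem_ball_self (by linarith)⟩)
    refine ⟨t.image (fun x => Metric.ball x (c / 4)), ?_, ?_, ?_⟩
    · intro U hU
      obtain ⟨x, _, rfl⟩ := Finset.mem_image.1 hU
      exact Metric.isOpen_ball
    · apply Set.eq_univ_of_univ_subset
      intro x hx
      obtain ⟨B, hB, hxB⟩ := Set.mem_iUnion₂.1 (ht hx)
      exact ⟨Metric.ball B (c / 4), by
        simpa using Finset.mem_image.2 ⟨B, hB, rfl⟩, hxB⟩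
    · intro U hU x hx y hy
      by_contra hne
      obtain ⟨g, hg⟩ := hexp x y hne
      have hxg : Φ g x ∈ closure (U g) := (hmem _ _ _).1 (Set.mem_iInter.1 hx g)
      have hyg : Φ g y ∈ closure (U g) := (hmem _ _ _).1 (Set.mem_iInter.1 hy g)
      obtain ⟨z, _, hz⟩ := Finset.mem_image.1 (hU g)
      have hsub : closure (U g) ⊆ Metric.closedBall z (c / 4) := by
        rw [← hz]
        exact closure_minimal Metric.ball_subset_closedBall Metric.isClosed_closedBall
      have h1 := Metric.mem_closedBall.1 (hsub hxg)
      have h2 := Metric.mem_closedBall.1 (hsub hyg)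
      have : dist (Φ g x) (Φ g y) ≤ c / 2 := by
        calc dist (Φ g x) (Φ g y) ≤ dist (Φ g x) z + dist z (Φ g y) := dist_triangle _ _ _
        _ ≤ c / 4 + c / 4 := add_le_add h1 (by rwa [dist_comm])
        _ = c / 2 := by ring
      linarith
  -- Generator → Weak generator
  have gw : ∀ Λ : Finset (Set X), IsGenerator Φ Λ → IsWeakGenerator Φ Λ := by
    rintro Λ ⟨h1, h2, h3⟩
    refine ⟨h1, h2, fun U hU => (h3 U hU).anti ?_⟩
    exact Set.iInter_mono fun g => Set.image_mono subset_closure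
  -- Weak generator → Expansive
  have we : (∃ Λ : Finset (Set X), IsWeakGenerator Φ Λ) → Expansive Φ := by
    rintro ⟨Λ, hopen, hcov, hsub⟩
    obtain ⟨δ, hδ, hleb⟩ := lebesgue_number_lemma_of_metric_sUnion
      (isCompact_univ (X := X)) hopen hcov.ge
    refine ⟨δ / 2, by linarith, ?_⟩
    intro x y hne
    by_contra h
    push_neg at h
    choose U hUΛ hUb using fun g : G => hleb (Φ g x) (Set.mem_univ _)
    refine hne (hsub U hUΛ ?_ ?_)
    · exact Set.mem_iInter.2 fun g =>
        (hmem _ _ _).2 (hUb g (Metric.mem_ball_self hδ))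
    · refine Set.mem_iInter.2 fun g => (hmem _ _ _).2 (hUb g ?_)
      have := h g
      simp only [Metric.mem_ball]
      rw [dist_comm]
      linarith
  refine ⟨⟨eg, fun h => we (h.imp fun Λ => gw Λ)⟩,
    ⟨fun h => h.imp fun Λ => gw Λ, fun h => eg (we h)⟩⟩
end

section
/- Let G be a group with a finite symmetric generating set S, let Φ be a commutative uniformly continuous action of G on a metric space (X,d), and let m ∈ ℤ∖{0}. Define the action Φ^m by (Φ^m)_g = Φ_{g^m} for g ∈ G. Then Φ is expansive if and only if Φ^m is expansive. -/
/-- For a commutative uniformly continuous action `Φ` and `m ∈ ℤ \ {0}`,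
`Φ` is expansive iff the `m`-th power action `(Φ^m)_g = Φ_{g^m}` is expansive. -/
theorem expansive_iff_expansive_zpow
    {G X : Type*} [Group G] [MetricSpace X]
    (Φ : G → X → X) (S : Finset G) (m : ℤ) (hm : m ≠ 0)
    (hSsymm : ∀ s ∈ S, s⁻¹ ∈ S)
    (hSgen : Subgroup.closure (S : Set G) = ⊤)
    (hΦ1 : ∀ x : X, Φ 1 x = x)
    (hΦmul : ∀ g h : G, ∀ x : X, Φ (g * h) x = Φ g (Φ h x))
    (hΦuc : ∀ g : G, UniformContinuous (Φ g))
    (hcomm : ∀ s ∈ S, ∀ s' ∈ S, ∀ x : X, Φ s (Φ s' x) = Φ s' (Φ s x)) :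
    Expansive Φ ↔ Expansive (fun g : G => Φ (g ^ m)) := by
  classical
  -- the action as a homomorphism into permutations
  set ψ : G →* Equiv.Perm X :=
    { toFun := fun g =>
        { toFun := Φ g
          invFun := Φ g⁻¹
          left_inv := fun x => by rw [← hΦmul, inv_mul_cancel, hΦ1]
          right_inv := fun x => by rw [← hΦmul, mul_inv_cancel, hΦ1] }
      map_one' := Equiv.ext fun x => hΦ1 x
      map_mul' := fun g h => Equiv.ext fun x => hΦmul g h x } with hψdef
  have hψapp : ∀ g (x : X), ψ g x = Φ g x := fun _ _ => rfl
  -- the submonoid closure of S is everything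
  have hSub : Submonoid.closure (S : Set G) = ⊤ := by
    have hU : (S : Set G) ∪ (S : Set G)⁻¹ = (S : Set G) := by
      apply Set.union_eq_self_of_subset_right
      intro x hx
      have : x⁻¹ ∈ S := Set.mem_inv.mp hx
      simpa using hSsymm _ this
    have h1 := Subgroup.closure_toSubmonoid (S : Set G)
    rw [hSgen, hU] at h1
    rw [← h1, Subgroup.top_toSubmonoid]
  have hmem : ∀ g : G, g ∈ Submonoid.closure (S : Set G) := by
    intro g; rw [hSub]; trivial
  -- full commutativity of the action maps
  have key : ∀ g h : G, Commute (ψ g) (ψ h) := by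
    intro g h
    induction hmem g, hmem h using Submonoid.closure_induction₂ with
    | mem a b ha hb =>
      show ψ a * ψ b = ψ b * ψ a
      exact Equiv.ext fun x => hcomm a ha b hb x
    | one_left b hb => simp only [map_one]; exact Commute.one_left _
    | one_right b hb => simp only [map_one]; exact Commute.one_right _
    | mul_left a b c ha hb hc h1 h2 =>
      rw [map_mul]; exact Commute.mul_left h1 h2
    | mul_right a b c ha hb hc h1 h2 =>
      rw [map_mul]; exact Commute.mul_right h1 h2
  letI : CommGroup ↥ψ.range :=
    { (inferInstance : Group ↥ψ.range) with
      mul_comm := by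
        rintro ⟨_, g, rfl⟩ ⟨_, h, rfl⟩
        exact Subtype.ext (key g h) }
  set ψP : G →* ↥ψ.range := ψ.rangeRestrict with hψPdef
  have hψPval : ∀ g : G, ((ψP g : Equiv.Perm X)) = ψ g := fun _ => rfl
  set n : ℕ := m.natAbs with hndef
  have hn : 0 < n := Int.natAbs_pos.mpr hm
  have hsign : m.sign * m = (n : ℤ) := by
    rcases lt_trichotomy m 0 with h | h | h
    · rw [Int.sign_eq_neg_one_of_neg h]; omega
    · exact absurd h hm
    · rw [Int.sign_eq_one_of_pos h]; omega
  have hsurj : Function.Surjective ψP := ψ.rangeRestrict_surjective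
  -- reduction of exponents modulo n
  have reduce : ∀ (r : G → ℕ) (g : G), ∃ (r' : G → ℕ) (g' : G), (∀ s, r' s < n) ∧
      (∏ s ∈ S, ψP s ^ r' s) * ψP g' ^ m = (∏ s ∈ S, ψP s ^ r s) * ψP g ^ m := by
    intro r g
    obtain ⟨g0, hg0⟩ := hsurj (∏ s ∈ S, (ψP s ^ m.sign) ^ (r s / n : ℕ))
    refine ⟨fun s => r s % n, g0 * g, fun s => Nat.mod_lt _ hn, ?_⟩
    have hsplit : ∀ s : G,
        ψP s ^ (r s % n) * ((ψP s ^ m.sign) ^ (r s / n : ℕ)) ^ m = ψP s ^ r s := by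
      intro s
      have h1 : ((ψP s ^ m.sign) ^ (r s / n : ℕ)) ^ m = ψP s ^ (n * (r s / n)) := by
        rw [← zpow_natCast (ψP s ^ m.sign) (r s / n), ← zpow_mul, ← zpow_mul,
          ← zpow_natCast (ψP s) (n * (r s / n))]
        congr 1
        push_cast
        rw [← hsign]; ring
      rw [h1, ← pow_add]
      congr 1
      exact Nat.mod_add_div _ _
    calc (∏ s ∈ S, ψP s ^ (r s % n)) * ψP (g0 * g) ^ m
        = (∏ s ∈ S, ψP s ^ (r s % n)) *
            ((∏ s ∈ S, (ψP s ^ m.sign) ^ (r s / n : ℕ)) ^ m * ψP g ^ m) := by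
          rw [map_mul, mul_zpow, hg0]
      _ = ((∏ s ∈ S, ψP s ^ (r s % n)) *
            (∏ s ∈ S, ((ψP s ^ m.sign) ^ (r s / n : ℕ)) ^ m)) * ψP g ^ m := by
          rw [Finset.prod_zpow, mul_assoc]
      _ = (∏ s ∈ S, ψP s ^ r s) * ψP g ^ m := by
          rw [← Finset.prod_mul_distrib]
          exact congrArg (· * ψP g ^ m) (Finset.prod_congr rfl fun s _ => hsplit s)
  -- main decomposition
  have decomp : ∀ h : G, ∃ (g : G) (r : G → ℕ), (∀ s, r s < n) ∧
      ψP h = (∏ s ∈ S, ψP s ^ r s) * ψP g ^ m := by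
    intro h
    induction hmem h using Submonoid.closure_induction with
    | mem s hs =>
      obtain ⟨r', g', hlt, heq⟩ := reduce (fun x => if x = s then 1 else 0) 1
      refine ⟨g', r', hlt, ?_⟩
      rw [heq]
      have h2 : (∏ x ∈ S, ψP x ^ (if x = s then 1 else 0)) = ψP s := by
        rw [Finset.prod_congr rfl (fun x _ => show ψP x ^ (if x = s then 1 else 0)
          = (if x = s then ψP x else 1) by split <;> simp)]
        rw [Finset.prod_ite_eq' S s (fun x => ψP x), if_pos (Finset.mem_coe.mp hs)]
      rw [h2]
      simp
    | one =>
      exact ⟨1, fun _ => 0, fun _ => hn, by simp⟩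
    | mul a b ha hb iha ihb =>
      obtain ⟨ga, ra, hra, hda⟩ := iha
      obtain ⟨gb, rb, hrb, hdb⟩ := ihb
      obtain ⟨r', g', hlt, heq⟩ := reduce (fun s => ra s + rb s) (ga * gb)
      refine ⟨g', r', hlt, ?_⟩
      rw [heq, map_mul, hda, hdb, map_mul, mul_zpow]
      simp only [pow_add, Finset.prod_mul_distrib]
      exact mul_mul_mul_comm _ _ _ _
  -- uniform continuity of any element of the range
  have hUCP : ∀ p : ↥ψ.range, UniformContinuous ((p : Equiv.Perm X) : X → X) := by
    rintro ⟨_, g, rfl⟩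
    exact hΦuc g
  constructor
  · rintro ⟨c, hc, hexp⟩
    set t : (↥S → Fin n) → ↥ψ.range :=
      fun ρ => ∏ s ∈ S.attach, ψP (s : G) ^ ((ρ s : ℕ)) with htdef
    have hUC : ∀ ρ, ∃ δ > 0, ∀ u v : X, dist u v < δ →
        dist ((t ρ : Equiv.Perm X) u) ((t ρ : Equiv.Perm X) v) < c :=
      fun ρ => Metric.uniformContinuous_iff.mp (hUCP (t ρ)) c hc
    choose δf hδf0 hδf using hUC
    have hne : Nonempty (↥S → Fin n) := ⟨fun _ => ⟨0, hn⟩⟩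
    have hune : (Finset.univ : Finset (↥S → Fin n)).Nonempty := Finset.univ_nonempty
    set δ := Finset.univ.inf' hune δf with hδdef
    have hδpos : 0 < δ := by
      rw [hδdef, Finset.lt_inf'_iff]
      exact fun ρ _ => hδf0 ρ
    refine ⟨δ / 2, by linarith, ?_⟩
    intro x y hxy
    obtain ⟨h, hh⟩ := hexp x y hxy
    obtain ⟨g, r, hrlt, hdec⟩ := decomp h
    refine ⟨g, ?_⟩
    by_contra hle
    push_neg at hle
    set ρ : ↥S → Fin n := fun s => ⟨r (s : G), hrlt _⟩ with hρ
    have hprod : (∏ s ∈ S, ψP s ^ r s) = t ρ :=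
      (Finset.prod_attach S fun s => ψP s ^ r s).symm
    rw [hprod] at hdec
    have hval : ψ h = (t ρ : Equiv.Perm X) * ψ (g ^ m) := by
      have h1 := congrArg Subtype.val hdec
      simp only [MulMemClass.coe_mul, SubgroupClass.coe_zpow] at h1
      rw [hψPval, hψPval, ← map_zpow] at h1
      exact h1
    have happ : ∀ z : X, Φ h z = (t ρ : Equiv.Perm X) (Φ (g ^ m) z) := by
      intro z
      rw [← hψapp, hval, Equiv.Perm.mul_apply, hψapp]
    have hd : dist (Φ h x) (Φ h y) < c := by
      rw [happ x, happ y]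
      apply hδf ρ
      calc dist (Φ (g ^ m) x) (Φ (g ^ m) y) ≤ δ / 2 := hle
        _ < δ := by linarith
        _ ≤ δf ρ := Finset.inf'_le _ (Finset.mem_univ ρ)
    exact absurd hh (by linarith)
  · rintro ⟨c, hc, hexp⟩
    refine ⟨c, hc, fun x y hxy => ?_⟩
    obtain ⟨g, hg⟩ := hexp x y hxy
    exact ⟨g ^ m, hg⟩
end

section
/- Let G be a group with a finite symmetric generating set S, let π : Y → X be a locally isometric covering map between metric spaces (Y,p) and (X,d), and let Φ and Ψ be uniformly continuous actions of G on X and Y respectively with π ∘ Ψ_g = Φ_g ∘ π for all g ∈ G. Suppose there exists δ₀ > 0 such that for each y ∈ Y and each 0 < δ < δ₀, π maps the open ball U_δ(y) isometrically onto the open ball U_δ(π(y)). Then Φ is expansive if and only if Ψ is expansive. -/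
/-- `π : Y → X` is a locally isometric covering map: a continuous surjection
such that every `x ∈ X` has a neighbourhood `U` whose preimage is a union of
a pairwise disjoint family of open sets, each mapped bijectively and
isometrically onto `U` by `π`. -/
def IsLocallyIsometricCovering {Y X : Type*} [MetricSpace Y] [MetricSpace X]
    (π : Y → X) : Prop :=
  Continuous π ∧ Function.Surjective π ∧
    ∀ x : X, ∃ U : Set X, U ∈ nhds x ∧ ∃ 𝒱 : Set (Set Y),
      (∀ V ∈ 𝒱, IsOpen V) ∧ 𝒱.PairwiseDisjoint id ∧ π ⁻¹' U = ⋃₀ 𝒱 ∧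
        ∀ V ∈ 𝒱, Set.BijOn π V U ∧
          ∀ y₁ ∈ V, ∀ y₂ ∈ V, dist (π y₁) (π y₂) = dist y₁ y₂

/-- If `π : Y → X` is a locally isometric covering map intertwining the
uniformly continuous actions `Ψ` (on `Y`) and `Φ` (on `X`), and `π` maps all
sufficiently small balls isometrically onto balls, then `Φ` is expansive iff
`Ψ` is expansive. -/
theorem expansive_iff_expansive_of_locallyIsometricCovering
    {G X Y : Type*} [Group G] [MetricSpace X] [MetricSpace Y]
    (Φ : G → X → X) (Ψ : G → Y → Y) (S : Finset G) (π : Y → X)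
    (hSsymm : ∀ s ∈ S, s⁻¹ ∈ S)
    (hSgen : Subgroup.closure (S : Set G) = ⊤)
    (hΦ1 : ∀ x : X, Φ 1 x = x)
    (hΦmul : ∀ g h : G, ∀ x : X, Φ (g * h) x = Φ g (Φ h x))
    (hΦuc : ∀ g : G, UniformContinuous (Φ g))
    (hΨ1 : ∀ y : Y, Ψ 1 y = y)
    (hΨmul : ∀ g h : G, ∀ y : Y, Ψ (g * h) y = Ψ g (Ψ h y))
    (hΨuc : ∀ g : G, UniformContinuous (Ψ g))
    (hπ : IsLocallyIsometricCovering π)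
    (hsemiconj : ∀ g : G, ∀ y : Y, π (Ψ g y) = Φ g (π y))
    (δ₀ : ℝ) (hδ₀ : 0 < δ₀)
    (hball : ∀ y : Y, ∀ δ : ℝ, 0 < δ → δ < δ₀ →
      Set.BijOn π (Metric.ball y δ) (Metric.ball (π y) δ) ∧
        ∀ y₁ ∈ Metric.ball y δ, ∀ y₂ ∈ Metric.ball y δ,
          dist (π y₁) (π y₂) = dist y₁ y₂) :
    Expansive Φ ↔ Expansive Ψ := by
  classical
  -- π is an isometry at scales below δ₀
  have hiso : ∀ y₁ y₂ : Y, dist y₁ y₂ < δ₀ → dist (π y₁) (π y₂) = dist y₁ y₂ := by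
    intro y₁ y₂ h
    have h0 : (0:ℝ) ≤ dist y₁ y₂ := dist_nonneg
    have hδpos : 0 < (dist y₁ y₂ + δ₀) / 2 := by linarith
    have hδlt : (dist y₁ y₂ + δ₀) / 2 < δ₀ := by linarith
    have hmem1 : y₁ ∈ Metric.ball y₁ ((dist y₁ y₂ + δ₀) / 2) := by
      simp [Metric.mem_ball]; linarith
    have hmem2 : y₂ ∈ Metric.ball y₁ ((dist y₁ y₂ + δ₀) / 2) := by
      simp [Metric.mem_ball, dist_comm y₂ y₁]; linarith
    exact (hball y₁ _ hδpos hδlt).2 y₁ hmem1 y₂ hmem2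
  constructor
  · rintro ⟨c, hc, hΦexp⟩
    refine ⟨min c (δ₀ / 2), lt_min hc (by linarith), ?_⟩
    intro y y' hne
    by_cases hpi : π y = π y'
    · refine ⟨1, ?_⟩
      rw [hΨ1, hΨ1]
      by_contra hle
      push_neg at hle
      have hlt : dist y y' < δ₀ :=
        lt_of_le_of_lt hle (lt_of_le_of_lt (min_le_right _ _) (by linarith))
      have h := hiso y y' hlt
      rw [hpi] at h
      simp at h
      exact hne h
    · obtain ⟨g, hg⟩ := hΦexp _ _ hpi
      refine ⟨g, ?_⟩
      by_cases hd : dist (Ψ g y) (Ψ g y') < δ₀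
      · have h := hiso _ _ hd
        rw [hsemiconj, hsemiconj] at h
        calc min c (δ₀ / 2) ≤ c := min_le_left _ _
          _ < dist (Φ g (π y)) (Φ g (π y')) := hg
          _ = dist (Ψ g y) (Ψ g y') := h
      · push_neg at hd
        calc min c (δ₀ / 2) ≤ δ₀ / 2 := min_le_right _ _
          _ < δ₀ := by linarith
          _ ≤ dist (Ψ g y) (Ψ g y') := hd
  · rintro ⟨c, hc, hΨexp⟩
    set c' : ℝ := min c (δ₀ / 2) with hc'def
    have hc' : 0 < c' := lt_min hc (by linarith)
    have hc'δ : c' < δ₀ := lt_of_le_of_lt (min_le_right _ _) (by linarith)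
    have hc'c : c' ≤ c := min_le_left _ _
    -- uniform continuity over the finite set S
    have key : ∀ T : Finset G, ∃ ε > (0:ℝ),
        ∀ s ∈ T, ∀ a b : Y, dist a b < ε → dist (Ψ s a) (Ψ s b) < c' := by
      intro T
      induction T using Finset.induction_on with
      | empty => exact ⟨1, one_pos, by simp⟩
      | @insert t T ht ih =>
        obtain ⟨ε, hε, hεT⟩ := ih
        obtain ⟨η, hη, hηt⟩ := Metric.uniformContinuous_iff.mp (hΨuc t) c' hc'
        refine ⟨min ε η, lt_min hε hη, ?_⟩
        intro s hs a b hab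
        rcases Finset.mem_insert.mp hs with rfl | hs
        · exact hηt (lt_of_lt_of_le hab (min_le_right _ _))
        · exact hεT s hs a b (lt_of_lt_of_le hab (min_le_left _ _))
    obtain ⟨ε₀, hε₀, hεS⟩ := key S
    set ε : ℝ := min ε₀ c' with hεdef
    have hεpos : 0 < ε := lt_min hε₀ hc'
    have hεc' : ε ≤ c' := min_le_right _ _
    have hεS' : ∀ s ∈ S, ∀ a b : Y, dist a b < ε → dist (Ψ s a) (Ψ s b) < c' :=
      fun s hs a b hab => hεS s hs a b (lt_of_lt_of_le hab (min_le_left _ _))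
    refine ⟨ε / 2, by linarith, ?_⟩
    intro x x' hxx
    by_contra hcon
    push_neg at hcon
    -- lift x and x' to Y
    obtain ⟨y, hy⟩ := hπ.2.1 x
    have hdxx : dist x x' ≤ ε / 2 := by
      have h := hcon 1; rwa [hΦ1, hΦ1] at h
    have hdxxδ : dist x x' < δ₀ := by
      have : ε / 2 < δ₀ := by
        calc ε / 2 < ε := by linarith
          _ ≤ c' := hεc'
          _ < δ₀ := hc'δ
      linarith
    have h0 : (0:ℝ) ≤ dist x x' := dist_nonneg
    have hδpos : 0 < (dist x x' + δ₀) / 2 := by linarith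
    have hδlt : (dist x x' + δ₀) / 2 < δ₀ := by linarith
    have hx'mem : x' ∈ Metric.ball (π y) ((dist x x' + δ₀) / 2) := by
      rw [hy]; simp [Metric.mem_ball, dist_comm x' x]; linarith
    obtain ⟨y', hy'mem, hy'⟩ := (hball y _ hδpos hδlt).1.surjOn hx'mem
    have hymem : y ∈ Metric.ball y ((dist x x' + δ₀) / 2) := by
      simp [Metric.mem_ball]; linarith
    have hyy' : dist y y' = dist x x' := by
      have h := (hball y _ hδpos hδlt).2 y hymem y' hy'mem
      rw [hy, hy'] at h; exact h.symm
    have hne' : y ≠ y' := by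
      intro h; apply hxx; rw [← hy, ← hy', h]
    -- key inductive claim along the group
    have claim : ∀ g : G, dist (Ψ g y) (Ψ g y') < ε := by
      intro g
      have hg : g ∈ Subgroup.closure (S : Set G) := by
        rw [hSgen]; exact Subgroup.mem_top g
      induction hg using Subgroup.closure_induction_left with
      | one =>
        rw [hΨ1, hΨ1, hyy']
        linarith
      | mul_left s hs g hg ih =>
        have h1 : dist (Ψ s (Ψ g y)) (Ψ s (Ψ g y')) < c' := hεS' s hs _ _ ih
        rw [← hΨmul, ← hΨmul] at h1
        have h2 : dist (Ψ (s * g) y) (Ψ (s * g) y') < δ₀ := lt_trans h1 hc'δ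
        have h3 := hiso _ _ h2
        rw [hsemiconj, hsemiconj, hy, hy'] at h3
        calc dist (Ψ (s * g) y) (Ψ (s * g) y') = dist (Φ (s * g) x) (Φ (s * g) x') :=
              h3.symm
          _ ≤ ε / 2 := hcon (s * g)
          _ < ε := by linarith
      | inv_mul_cancel s hs g hg ih =>
        have hs' : s⁻¹ ∈ S := hSsymm s hs
        have h1 : dist (Ψ s⁻¹ (Ψ g y)) (Ψ s⁻¹ (Ψ g y')) < c' := hεS' s⁻¹ hs' _ _ ih
        rw [← hΨmul, ← hΨmul] at h1
        have h2 : dist (Ψ (s⁻¹ * g) y) (Ψ (s⁻¹ * g) y') < δ₀ := lt_trans h1 hc'δ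
        have h3 := hiso _ _ h2
        rw [hsemiconj, hsemiconj, hy, hy'] at h3
        calc dist (Ψ (s⁻¹ * g) y) (Ψ (s⁻¹ * g) y') = dist (Φ (s⁻¹ * g) x) (Φ (s⁻¹ * g) x') :=
              h3.symm
          _ ≤ ε / 2 := hcon (s⁻¹ * g)
          _ < ε := by linarith
    obtain ⟨g, hgexp⟩ := hΨexp y y' hne'
    have : dist (Ψ g y) (Ψ g y') < ε := claim g
    have : ε ≤ c := le_trans hεc' hc'c
    linarith [hgexp]
end

section
/- Let G be a group with a finite symmetric generating set S, and let X be a metric space in which every closed ball is compact. If a uniformly continuous action Φ of G on X is expansive and has the shadowing property with respect to S, then Φ is strongly GH-stable with respect to S. -/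
/-- The truncated metric `d^X(a,b) = min(d(a,b), 1)`. -/
noncomputable def truncDist {Z : Type*} [MetricSpace Z] (a b : Z) : ℝ :=
  min (dist a b) 1

/-- The Hausdorff distance between subsets `A, B ⊆ Z` with respect to the
truncated metric `d^Z`. -/
noncomputable def truncHausdorffDist {Z : Type*} [MetricSpace Z]
    (A B : Set Z) : ℝ :=
  max (sSup ((fun a => sInf ((fun b => truncDist a b) '' B)) '' A))
      (sSup ((fun b => sInf ((fun a => truncDist a b) '' A)) '' B))

/-- A (not necessarily continuous) map `i : Y → X` is a `δ`-isometry: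
`max{d^X_H(i(Y), X), sup_{y₁,y₂} |d^X(i y₁, i y₂) − d^Y(y₁, y₂)|} < δ`. -/
noncomputable def IsDeltaIsometry {Y X : Type*} [MetricSpace Y] [MetricSpace X]
    (δ : ℝ) (i : Y → X) : Prop :=
  max (truncHausdorffDist (Set.range i) (Set.univ : Set X))
      (sSup (Set.range fun p : Y × Y =>
        |truncDist (i p.1) (i p.2) - truncDist p.1 p.2|)) < δ

/-- `sup_{(s,y) ∈ S × Y} d^X(Φ_s(i y), i(Ψ_s y))`. -/
noncomputable def semiconjDefect {G Y X : Type*} [Group G] [MetricSpace Y]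
    [MetricSpace X] (S : Finset G) (Φ : G → X → X) (Ψ : G → Y → Y)
    (i : Y → X) : ℝ :=
  sSup {r : ℝ | ∃ s ∈ S, ∃ y : Y, r = truncDist (Φ s (i y)) (i (Ψ s y))}

/-- `Φ` is strongly GH-stable with respect to `S`: for every `ε > 0` there is
`δ > 0` such that for every metric space `Y` and every uniformly continuous
action `Ψ` of `G` on `Y` admitting a `δ`-isometry `i : Y → X` with
`sup_{(s,y)} d^X(Φ_s(i y), i(Ψ_s y)) < δ`, there is a continuous `ε`-isometry
`k : Y → X` with `Φ_g ∘ k = k ∘ Ψ_g` for all `g ∈ G`. -/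
def StronglyGHStable {G X : Type*} [Group G] [MetricSpace X]
    (Φ : G → X → X) (S : Finset G) : Prop :=
  ∀ ε : ℝ, 0 < ε → ∃ δ : ℝ, 0 < δ ∧
    ∀ (Y : Type*) (_ : MetricSpace Y) (Ψ : G → Y → Y),
      (∀ y : Y, Ψ 1 y = y) → (∀ g h : G, ∀ y : Y, Ψ (g * h) y = Ψ g (Ψ h y)) →
      (∀ g : G, UniformContinuous (Ψ g)) →
      (∃ i : Y → X, IsDeltaIsometry δ i ∧ semiconjDefect S Φ Ψ i < δ) →
      ∃ k : Y → X, Continuous k ∧ IsDeltaIsometry ε k ∧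
        ∀ g : G, ∀ y : Y, Φ g (k y) = k (Ψ g y)

/-- `Φ` has the shadowing property with respect to `S`. -/
def ShadowingProperty {G X : Type*} [Group G] [MetricSpace X]
    (Φ : G → X → X) (S : Finset G) : Prop :=
  ∀ ε : ℝ, 0 < ε → ∃ δ : ℝ, 0 < δ ∧
    ∀ f : G → X, IsPseudoOrbit Φ S δ f → ∃ x : X, ∀ g : G, dist (Φ g x) (f g) < ε

section helpers

variable {Z : Type*} [MetricSpace Z]

lemma truncDist_nonneg (a b : Z) : 0 ≤ truncDist a b :=
  le_min dist_nonneg zero_le_one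

lemma truncDist_le_one (a b : Z) : truncDist a b ≤ 1 :=
  min_le_right _ _

lemma truncDist_le_dist (a b : Z) : truncDist a b ≤ dist a b :=
  min_le_left _ _

lemma truncDist_comm (a b : Z) : truncDist a b = truncDist b a := by
  simp [truncDist, dist_comm]

lemma truncDist_self (a : Z) : truncDist a a = 0 := by
  simp [truncDist]

lemma truncDist_triangle (a b c : Z) :
    truncDist a c ≤ truncDist a b + truncDist b c := by
  rcases le_or_gt 1 (dist a b) with h | h
  · have : truncDist a b = 1 := min_eq_right h
    have h2 := truncDist_nonneg b c
    have h3 := truncDist_le_one a c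
    linarith
  rcases le_or_gt 1 (dist b c) with h' | h'
  · have : truncDist b c = 1 := min_eq_right h'
    have h2 := truncDist_nonneg a b
    have h3 := truncDist_le_one a c
    linarith
  · have hab : truncDist a b = dist a b := min_eq_left h.le
    have hbc : truncDist b c = dist b c := min_eq_left h'.le
    have := dist_triangle a b c
    have h3 := truncDist_le_dist a c
    linarith

lemma dist_lt_of_truncDist_lt {a b : Z} {r : ℝ}
    (h : truncDist a b < r) (hr : r ≤ 1) : dist a b < r := by
  rcases le_or_gt (dist a b) 1 with h1 | h1
  · rwa [truncDist, min_eq_left h1] at h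
  · rw [truncDist, min_eq_right h1.le] at h; linarith

lemma abs_truncDist_sub_truncDist_le (a b c d : Z) :
    |truncDist a b - truncDist c d| ≤ truncDist a c + truncDist b d := by
  rw [abs_sub_le_iff]
  constructor
  · have h1 := truncDist_triangle a c b
    have h2 := truncDist_triangle c d b
    have h3 := truncDist_comm d b
    linarith
  · have h1 := truncDist_triangle c a d
    have h2 := truncDist_triangle a b d
    have h3 := truncDist_comm c a
    linarith

end helpers

/-- An expansive uniformly continuous action with the shadowing property on a
metric space in which every closed ball is compact is strongly GH-stable. -/
theorem stronglyGHStable_of_expansive_of_shadowing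
    {G X : Type*} [Group G] [MetricSpace X] [ProperSpace X]
    (Φ : G → X → X) (S : Finset G)
    (hSsymm : ∀ s ∈ S, s⁻¹ ∈ S)
    (hSgen : Subgroup.closure (S : Set G) = ⊤)
    (hΦ1 : ∀ x : X, Φ 1 x = x)
    (hΦmul : ∀ g h : G, ∀ x : X, Φ (g * h) x = Φ g (Φ h x))
    (hΦuc : ∀ g : G, UniformContinuous (Φ g))
    (hexp : Expansive Φ)
    (hshad : ShadowingProperty Φ S) :
    StronglyGHStable Φ S := by
  obtain ⟨c, hc, hcsep⟩ := hexp
  intro ε hε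
  set ε₁ : ℝ := min (min ε c) 1 / 8 with hε₁def
  have hε₁ : 0 < ε₁ := by
    have h1 : 0 < min (min ε c) 1 := lt_min (lt_min hε hc) one_pos
    positivity
  have hε₁ε : 8 * ε₁ ≤ ε := by
    have : min (min ε c) 1 ≤ ε := le_trans (min_le_left _ _) (min_le_left _ _)
    rw [hε₁def]; linarith
  have hε₁c : 8 * ε₁ ≤ c := by
    have : min (min ε c) 1 ≤ c := le_trans (min_le_left _ _) (min_le_right _ _)
    rw [hε₁def]; linarith
  have hε₁1 : 8 * ε₁ ≤ 1 := by
    have : min (min ε c) 1 ≤ 1 := min_le_right _ _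
    rw [hε₁def]; linarith
  obtain ⟨δ₀, hδ₀, hδ₀shad⟩ := hshad ε₁ hε₁
  set δ : ℝ := min δ₀ ε₁ / 2 with hδdef
  have hδpos : 0 < δ := by
    have : 0 < min δ₀ ε₁ := lt_min hδ₀ hε₁
    positivity
  have hδδ₀ : δ < δ₀ := by
    have h1 : min δ₀ ε₁ ≤ δ₀ := min_le_left _ _
    rw [hδdef]; linarith
  have hδε₁ : δ ≤ ε₁ := by
    have h1 : min δ₀ ε₁ ≤ ε₁ := min_le_right _ _
    rw [hδdef]; linarith
  have hδ1 : δ < 1 := by linarith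
  refine ⟨δ, hδpos, ?_⟩
  intro Y _ Ψ hΨ1 hΨmul hΨuc ⟨i, hi, hsemi⟩
  have huniq : ∀ x x' : X, (∀ g : G, dist (Φ g x) (Φ g x') ≤ c) → x = x' := by
    intro x x' h
    by_contra hne
    obtain ⟨g, hg⟩ := hcsep x x' hne
    exact absurd (h g) (not_le.2 hg)
  rcases isEmpty_or_nonempty Y with hY | hY
  · refine ⟨fun y => isEmptyElim y, continuous_iff_continuousAt.2 fun y => isEmptyElim y,
      ?_, fun g y => isEmptyElim y⟩
    have hrange : Set.range (fun y : Y => (isEmptyElim y : X)) = ∅ := Set.range_eq_empty _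
    rw [IsDeltaIsometry]
    apply max_lt
    · rw [truncHausdorffDist, hrange]
      apply max_lt
      · rw [Set.image_empty, Real.sSup_empty]; linarith
      · have : sSup ((fun b : X => sInf ((fun a => truncDist a b) '' (∅ : Set X))) ''
            Set.univ) ≤ 0 := by
          apply Real.sSup_le _ le_rfl
          rintro x ⟨b, -, rfl⟩
          simp [Real.sInf_empty]
        linarith
    · have : Set.range (fun p : Y × Y =>
          |truncDist ((fun y : Y => (isEmptyElim y : X)) p.1)
              ((fun y : Y => (isEmptyElim y : X)) p.2) - truncDist p.1 p.2|) = ∅ :=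
        Set.range_eq_empty _
      rw [this, Real.sSup_empty]; linarith
  -- main case : Y nonempty
  obtain ⟨y₀⟩ := hY
  rw [IsDeltaIsometry] at hi
  -- distortion bound for i
  have hbdd1 : ∀ y₁ y₂ : Y, |truncDist (i y₁) (i y₂) - truncDist y₁ y₂| < δ := by
    intro y₁ y₂
    have hb : BddAbove (Set.range fun p : Y × Y =>
        |truncDist (i p.1) (i p.2) - truncDist p.1 p.2|) := by
      refine ⟨1, ?_⟩
      rintro r ⟨p, rfl⟩
      rw [abs_sub_le_iff]
      constructor
      · have := truncDist_le_one (i p.1) (i p.2)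
        have := truncDist_nonneg p.1 p.2
        linarith
      · have := truncDist_le_one p.1 p.2
        have := truncDist_nonneg (i p.1) (i p.2)
        linarith
    have hle : |truncDist (i y₁) (i y₂) - truncDist y₁ y₂| ≤
        sSup (Set.range fun p : Y × Y =>
          |truncDist (i p.1) (i p.2) - truncDist p.1 p.2|) :=
      le_csSup hb ⟨(y₁, y₂), rfl⟩
    exact lt_of_le_of_lt (hle.trans (le_max_right _ _)) hi
  -- almost surjectivity of i
  have hsurj : ∀ x : X, ∃ y : Y, truncDist (i y) x < δ := by
    intro x
    have hT2 : sSup ((fun b : X => sInf ((fun a => truncDist a b) '' Set.range i)) ''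
        Set.univ) < δ := by
      refine lt_of_le_of_lt ?_ (lt_of_le_of_lt (le_max_left _ _) hi)
      exact le_max_right _ _
    have hmem : sInf ((fun a => truncDist a x) '' Set.range i) ∈
        ((fun b : X => sInf ((fun a => truncDist a b) '' Set.range i)) '' Set.univ) :=
      ⟨x, Set.mem_univ _, rfl⟩
    have hbA : BddAbove ((fun b : X => sInf ((fun a => truncDist a b) '' Set.range i)) ''
        Set.univ) := by
      refine ⟨1, ?_⟩
      rintro r ⟨b, -, rfl⟩
      refine le_trans (csInf_le ?_ ⟨i y₀, ⟨y₀, rfl⟩, rfl⟩) (truncDist_le_one _ _)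
      exact ⟨0, by rintro r ⟨a, -, rfl⟩; exact truncDist_nonneg _ _⟩
    have hlt : sInf ((fun a => truncDist a x) '' Set.range i) < δ :=
      lt_of_le_of_lt (le_csSup hbA hmem) hT2
    have hne : ((fun a => truncDist a x) '' Set.range i).Nonempty :=
      ⟨truncDist (i y₀) x, ⟨i y₀, ⟨y₀, rfl⟩, rfl⟩⟩
    obtain ⟨r, ⟨a, ⟨y, rfl⟩, rfl⟩, hr⟩ := exists_lt_of_csInf_lt hne hlt
    exact ⟨y, hr⟩
  -- semiconjugacy defect pointwise
  have hsemi' : ∀ s ∈ S, ∀ y : Y, dist (Φ s (i y)) (i (Ψ s y)) < δ := by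
    intro s hs y
    have hb : BddAbove {r : ℝ | ∃ s ∈ S, ∃ y : Y, r = truncDist (Φ s (i y)) (i (Ψ s y))} := by
      refine ⟨1, ?_⟩
      rintro r ⟨s, -, y, rfl⟩
      exact truncDist_le_one _ _
    have hle : truncDist (Φ s (i y)) (i (Ψ s y)) ≤ semiconjDefect S Φ Ψ i :=
      le_csSup hb ⟨s, hs, y, rfl⟩
    exact dist_lt_of_truncDist_lt (lt_of_le_of_lt hle hsemi) hδ1.le
  -- shadowing gives the tracing point
  have hex : ∀ y : Y, ∃ x : X, ∀ g : G, dist (Φ g x) (i (Ψ g y)) < ε₁ := by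
    intro y
    apply hδ₀shad (fun g => i (Ψ g y))
    intro s hs g
    have h1 := hsemi' s hs (Ψ g y)
    have h2 : Ψ (s * g) y = Ψ s (Ψ g y) := hΨmul s g y
    simpa [h2] using lt_of_lt_of_le h1 hδδ₀.le
  choose k hk using hex
  -- uniqueness of the tracing point
  have hkuniq : ∀ (y : Y) (x : X), (∀ g : G, dist (Φ g x) (i (Ψ g y)) ≤ ε₁ + δ) → x = k y := by
    intro y x h
    apply huniq
    intro g
    calc dist (Φ g x) (Φ g (k y)) ≤
        dist (Φ g x) (i (Ψ g y)) + dist (i (Ψ g y)) (Φ g (k y)) := dist_triangle _ _ _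
      _ ≤ (ε₁ + δ) + ε₁ := by
          have := (hk y g)
          rw [dist_comm (i (Ψ g y))]
          exact add_le_add (h g) this.le
      _ ≤ c := by linarith
  -- equivariance
  have hequiv : ∀ g : G, ∀ y : Y, Φ g (k y) = k (Ψ g y) := by
    intro g y
    apply hkuniq (Ψ g y) (Φ g (k y))
    intro h
    have h1 : Φ h (Φ g (k y)) = Φ (h * g) (k y) := (hΦmul h g (k y)).symm
    have h2 : Ψ h (Ψ g y) = Ψ (h * g) y := (hΨmul h g y).symm
    rw [h1, h2]
    have := hk y (h * g)
    linarith
  -- k is close to i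
  have hki : ∀ y : Y, dist (k y) (i y) < ε₁ := by
    intro y
    have := hk y 1
    rwa [hΦ1, hΨ1] at this
  -- distortion bound for k
  have hkdist : ∀ y₁ y₂ : Y, |truncDist (k y₁) (k y₂) - truncDist y₁ y₂| ≤ 3 * ε₁ := by
    intro y₁ y₂
    have h1 : |truncDist (k y₁) (k y₂) - truncDist (i y₁) (i y₂)| ≤
        truncDist (k y₁) (i y₁) + truncDist (k y₂) (i y₂) :=
      abs_truncDist_sub_truncDist_le _ _ _ _
    have h2 := hbdd1 y₁ y₂
    have h3 : truncDist (k y₁) (i y₁) ≤ dist (k y₁) (i y₁) := truncDist_le_dist _ _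
    have h4 : truncDist (k y₂) (i y₂) ≤ dist (k y₂) (i y₂) := truncDist_le_dist _ _
    have h5 := hki y₁
    have h6 := hki y₂
    have h7 := abs_sub_le (truncDist (k y₁) (k y₂)) (truncDist (i y₁) (i y₂))
      (truncDist y₁ y₂)
    linarith
  -- the isometry estimate for k
  have hkiso : IsDeltaIsometry ε k := by
    rw [IsDeltaIsometry]
    apply max_lt
    · rw [truncHausdorffDist]
      apply max_lt
      · have : sSup ((fun a => sInf ((fun b => truncDist a b) '' (Set.univ : Set X))) ''
            Set.range k) ≤ 0 := by
          apply Real.sSup_le _ le_rfl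
          rintro r ⟨a, -, rfl⟩
          have hb : BddBelow ((fun b => truncDist a b) '' (Set.univ : Set X)) :=
            ⟨0, by rintro r ⟨b, -, rfl⟩; exact truncDist_nonneg _ _⟩
          have := csInf_le hb (⟨a, Set.mem_univ _, truncDist_self a⟩ :
            (0 : ℝ) ∈ (fun b => truncDist a b) '' (Set.univ : Set X))
          exact this
        linarith
      · have : sSup ((fun b : X => sInf ((fun a => truncDist a b) '' Set.range k)) ''
            Set.univ) ≤ 2 * ε₁ := by
          apply Real.sSup_le _ (by linarith)
          rintro r ⟨x, -, rfl⟩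
          obtain ⟨y, hy⟩ := hsurj x
          have hb : BddBelow ((fun a => truncDist a x) '' Set.range k) :=
            ⟨0, by rintro r ⟨a, -, rfl⟩; exact truncDist_nonneg _ _⟩
          refine le_trans (csInf_le hb ⟨k y, ⟨y, rfl⟩, rfl⟩) ?_
          have h1 := truncDist_triangle (k y) (i y) x
          have h2 : truncDist (k y) (i y) ≤ dist (k y) (i y) := truncDist_le_dist _ _
          have h3 := hki y
          linarith
        linarith
    · have : sSup (Set.range fun p : Y × Y =>
          |truncDist (k p.1) (k p.2) - truncDist p.1 p.2|) ≤ 3 * ε₁ := by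
        apply Real.sSup_le _ (by linarith)
        rintro r ⟨p, rfl⟩
        exact hkdist p.1 p.2
      linarith
  -- continuity of k
  have hcont : Continuous k := by
    rw [continuous_iff_continuousAt]
    intro y
    by_contra hnc
    rw [Metric.continuousAt_iff] at hnc
    push_neg at hnc
    obtain ⟨ρ, hρ, hbad⟩ := hnc
    have hsel : ∀ n : ℕ, ∃ y' : Y, dist y' y < 1 / (n + 2) ∧ ρ ≤ dist (k y') (k y) :=
      fun n => hbad (1 / (n + 2)) (by positivity)
    choose u hu1 hu2 using hsel
    have huy : Filter.Tendsto u Filter.atTop (nhds y) := by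
      rw [Metric.tendsto_atTop]
      intro r hr
      obtain ⟨N, hN⟩ := exists_nat_gt (1 / r)
      refine ⟨N, fun n hn => lt_of_lt_of_le (hu1 n) ?_⟩
      have h1 : (1 : ℝ) / r < n + 2 := by
        have : (N : ℝ) ≤ n := Nat.cast_le.2 hn
        linarith
      rw [div_le_iff₀ (by positivity : (0 : ℝ) < (n : ℝ) + 2)]
      rw [div_lt_iff₀ hr] at h1
      calc (1 : ℝ) ≤ 1 := le_rfl
        _ ≤ r * (n + 2) := by nlinarith
    have hball : ∀ n : ℕ, k (u n) ∈ Metric.closedBall (k y) 2 := by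
      intro n
      have h1 := hki (u n)
      have h2 := hki y
      have h3 : truncDist (i (u n)) (i y) < truncDist (u n) y + δ := by
        have := hbdd1 (u n) y
        have := abs_lt.1 this
        linarith [this.2]
      have h4 : truncDist (u n) y ≤ 1 / 2 := by
        refine le_trans (truncDist_le_dist _ _) (le_trans (hu1 n).le ?_)
        rw [div_le_div_iff₀ (by positivity) (by norm_num : (0:ℝ) < 2)]
        have : (0 : ℝ) ≤ n := Nat.cast_nonneg n
        linarith
      have h5 : dist (i (u n)) (i y) < 1 / 2 + δ := by
        apply dist_lt_of_truncDist_lt (lt_of_lt_of_le h3 (by linarith))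
        linarith
      rw [Metric.mem_closedBall]
      calc dist (k (u n)) (k y) ≤ dist (k (u n)) (i (u n)) + dist (i (u n)) (i y) +
            dist (i y) (k y) := dist_triangle4 _ _ _ _
        _ ≤ 2 := by rw [dist_comm (i y) (k y)]; linarith
    obtain ⟨z, hz, φ, hφ, hzt⟩ :=
      (isCompact_closedBall (k y) 2).tendsto_subseq hball
    have htrace : ∀ g : G, dist (Φ g z) (i (Ψ g y)) ≤ ε₁ + δ := by
      intro g
      refine le_of_forall_pos_le_add fun ζ hζ => ?_
      set ζ' : ℝ := min ζ (1 / 2) with hζ'def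
      have hζ'pos : 0 < ζ' := lt_min hζ (by norm_num)
      have hζ'ζ : ζ' ≤ ζ := min_le_left _ _
      have hζ'h : ζ' ≤ 1 / 2 := min_le_right _ _
      have htΨ : Filter.Tendsto (fun n => Ψ g (u (φ n))) Filter.atTop (nhds (Ψ g y)) :=
        ((hΨuc g).continuous.tendsto y).comp (huy.comp hφ.tendsto_atTop)
      have htΦ : Filter.Tendsto (fun n => Φ g (k (u (φ n)))) Filter.atTop
          (nhds (Φ g z)) := ((hΦuc g).continuous.tendsto z).comp hzt
      have hev : ∀ᶠ n in Filter.atTop,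
          dist (Φ g (k (u (φ n)))) (i (Ψ g y)) ≤ ε₁ + δ + ζ' := by
        have hev0 : ∀ᶠ n in Filter.atTop, dist (Ψ g (u (φ n))) (Ψ g y) < ζ' :=
          (Metric.tendsto_nhds.1 htΨ) ζ' hζ'pos
        filter_upwards [hev0] with n hn
        have h1 := hk (u (φ n)) g
        have h2 : truncDist (i (Ψ g (u (φ n)))) (i (Ψ g y)) <
            truncDist (Ψ g (u (φ n))) (Ψ g y) + δ := by
          have := abs_lt.1 (hbdd1 (Ψ g (u (φ n))) (Ψ g y))
          linarith [this.2]
        have h3 : truncDist (Ψ g (u (φ n))) (Ψ g y) < ζ' :=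
          lt_of_le_of_lt (truncDist_le_dist _ _) hn
        have h4 : dist (i (Ψ g (u (φ n)))) (i (Ψ g y)) < ζ' + δ := by
          apply dist_lt_of_truncDist_lt (by linarith)
          linarith
        calc dist (Φ g (k (u (φ n)))) (i (Ψ g y)) ≤
            dist (Φ g (k (u (φ n)))) (i (Ψ g (u (φ n)))) +
            dist (i (Ψ g (u (φ n)))) (i (Ψ g y)) := dist_triangle _ _ _
          _ ≤ ε₁ + δ + ζ' := by linarith
      have htd : Filter.Tendsto (fun n => dist (Φ g (k (u (φ n)))) (i (Ψ g y)))
          Filter.atTop (nhds (dist (Φ g z) (i (Ψ g y)))) :=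
        (htΦ.dist tendsto_const_nhds)
      have := le_of_tendsto htd hev
      linarith
    have hz' : z = k y := hkuniq y z htrace
    have htd2 : Filter.Tendsto (fun n => dist (k (u (φ n))) (k y)) Filter.atTop
        (nhds (dist z (k y))) := hzt.dist tendsto_const_nhds
    have hge : ρ ≤ dist z (k y) :=
      ge_of_tendsto htd2 (Filter.Eventually.of_forall fun n => hu2 (φ n))
    rw [hz', dist_self] at hge
    linarith
  exact ⟨k, hcont, hkiso, hequiv⟩
end

section
/- Let G be a group with a finite symmetric generating set S, let X be a metric space in which every closed ball is compact, and let Φ be a uniformly continuous action of G on X that is expansive with expansive constant c, 0 < c < 1, i.e. for all distinct x, y ∈ X there is g ∈ G with d(Φ_g(x), Φ_g(y)) > c. Then for each x ∈ X and each ε > 0 there exists n ≥ 0 such that for every x' ∈ X, if sup_{g∈G_n} min{d(Φ_g(x), Φ_g(x')), 1} ≤ c, then min{d(x, x'), 1} < ε. Here G_n = {g ∈ G : L(g) ≤ n} where L(g) is the word length of g with respect to S. -/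
/-- `g ∈ G_n`: `g` has word length at most `n` with respect to the generating
set `S`, i.e. `g` is a product of at most `n` elements of `S`. -/
def InWordBall {G : Type*} [Group G] (S : Finset G) (n : ℕ) (g : G) : Prop :=
  ∃ l : List G, (∀ s ∈ l, s ∈ S) ∧ l.length ≤ n ∧ l.prod = g

/-- Lemma: for an expansive uniformly continuous action (with expansive
constant `0 < c < 1`) on a metric space whose closed balls are compact, for
each `x` and `ε > 0` there is `n` such that if
`sup_{g ∈ G_n} min(d(Φ_g x, Φ_g x'), 1) ≤ c` then `min(d(x, x'), 1) < ε`. -/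
theorem exists_wordBall_expansivity_radius
    {G X : Type*} [Group G] [MetricSpace X] [ProperSpace X]
    (Φ : G → X → X) (S : Finset G)
    (hSsymm : ∀ s ∈ S, s⁻¹ ∈ S)
    (hSgen : Subgroup.closure (S : Set G) = ⊤)
    (hΦ1 : ∀ x : X, Φ 1 x = x)
    (hΦmul : ∀ g h : G, ∀ x : X, Φ (g * h) x = Φ g (Φ h x))
    (hΦuc : ∀ g : G, UniformContinuous (Φ g))
    (c : ℝ) (hc0 : 0 < c) (hc1 : c < 1)
    (hexp : ∀ x y : X, x ≠ y → ∃ g : G, dist (Φ g x) (Φ g y) > c) :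
    ∀ x : X, ∀ ε : ℝ, 0 < ε → ∃ n : ℕ, ∀ x' : X,
      (∀ g : G, InWordBall S n g → min (dist (Φ g x) (Φ g x')) 1 ≤ c) →
      min (dist x x') 1 < ε := by
  intro x ε hε
  by_contra h
  push_neg at h
  choose x' hx'1 hx'2 using h
  have hball : ∀ n, x' n ∈ Metric.closedBall x c := by
    intro n
    have h1 := hx'1 n 1 ⟨[], by simp⟩
    rw [hΦ1, hΦ1] at h1
    have : dist x (x' n) ≤ c := by
      rcases min_le_iff.mp h1 with h' | h'
      · exact h'
      · linarith
    simpa [Metric.mem_closedBall, dist_comm] using this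
  obtain ⟨y, hy, φ, hφ, hlim⟩ := (isCompact_closedBall x c).tendsto_subseq hball
  have hdistlim : Filter.Tendsto (fun k => dist x (x' (φ k))) Filter.atTop (nhds (dist x y)) :=
    Filter.Tendsto.dist tendsto_const_nhds hlim
  have hεd : ∀ n, ε ≤ dist x (x' n) := fun n =>
    le_trans (hx'2 n) (min_le_left _ _)
  have hxy : x ≠ y := by
    intro hxy
    have : ε ≤ dist x y := ge_of_tendsto hdistlim (Filter.Eventually.of_forall fun k => hεd (φ k))
    rw [← hxy, dist_self] at this
    linarith
  obtain ⟨g, hg⟩ := hexp x y hxy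
  -- g is a product of elements of S
  have hgmem : g ∈ Submonoid.closure ((S : Set G) ∪ (S : Set G)⁻¹) := by
    rw [← Subgroup.closure_toSubmonoid, hSgen]
    exact Subgroup.mem_top g
  obtain ⟨l, hl, hlp⟩ := Submonoid.exists_list_of_mem_closure hgmem
  have hlS : ∀ s ∈ l, s ∈ S := by
    intro s hs
    rcases hl s hs with h' | h'
    · exact h'
    · have := hSsymm s⁻¹ h'
      simpa using this
  -- Φ g continuous, so dist (Φ g x) (Φ g (x' (φ k))) → dist (Φ g x) (Φ g y)
  have hcont : Filter.Tendsto (fun k => dist (Φ g x) (Φ g (x' (φ k)))) Filter.atTop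
      (nhds (dist (Φ g x) (Φ g y))) :=
    Filter.Tendsto.dist tendsto_const_nhds (((hΦuc g).continuous.tendsto y).comp hlim)
  have hle : dist (Φ g x) (Φ g y) ≤ c := by
    refine le_of_tendsto hcont ?_
    filter_upwards [Filter.eventually_ge_atTop l.length] with k hk
    have hφk : l.length ≤ φ k := le_trans hk (hφ.le_apply)
    have hminle := hx'1 (φ k) g ⟨l, hlS, hφk, hlp⟩
    rcases min_le_iff.mp hminle with h' | h'
    · exact h'
    · linarith
  linarith
end

section
/- Let G be a group with a finite symmetric generating set S, let Φ be a uniformly continuous action of G on a metric space (X,d), let δ > 0 and x, y ∈ X. If x R^S_δ y, i.e. there exist a δ-pseudo orbit f of Φ with respect to S and distinct h, k ∈ G with f(h) = x and f(k) = y, then there exist a weak δ-chain of Φ from x to y and a weak δ-chain of Φ from y to x with respect to S. -/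
/-- A weak `δ`-chain of `Φ` from `x` to `y` with respect to `S`: a finite
sequence `x = x_0, x_1, …, x_k = y` together with generators
`s_0, …, s_{k-1} ∈ S` such that `d(Φ_{s_i}(x_i), x_{i+1}) < δ` for all
`0 ≤ i < k`. -/
def WeakChain {G X : Type*} [Group G] [MetricSpace X]
    (Φ : G → X → X) (S : Finset G) (δ : ℝ) (x y : X) : Prop :=
  ∃ (k : ℕ) (xs : ℕ → X) (ss : ℕ → G), xs 0 = x ∧ xs k = y ∧
    ∀ i < k, ss i ∈ S ∧ dist (Φ (ss i) (xs i)) (xs (i + 1)) < δ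

lemma WeakChain.snoc {G X : Type*} [Group G] [MetricSpace X]
    {Φ : G → X → X} {S : Finset G} {δ : ℝ} {x y z : X} {s : G}
    (hc : WeakChain Φ S δ x y) (hs : s ∈ S) (hd : dist (Φ s y) z < δ) :
    WeakChain Φ S δ x z := by
  obtain ⟨k, xs, ss, h0, hk, hstep⟩ := hc
  refine ⟨k + 1, fun i => if i ≤ k then xs i else z,
    fun i => if i < k then ss i else s, by simp [h0], by simp, ?_⟩
  intro i hi
  rcases lt_or_eq_of_le (Nat.lt_succ_iff.mp hi) with h | h
  · have h1 : i + 1 ≤ k := h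
    simp only [if_pos h.le, if_pos h1, if_pos h]
    exact hstep i h
  · subst h
    simp only [le_refl, if_pos, lt_irrefl, if_neg (lt_irrefl i),
      if_neg (Nat.not_le.mpr (Nat.lt_succ_self i)), hk]
    exact ⟨hs, hd⟩

lemma weakChain_of_list {G X : Type*} [Group G] [MetricSpace X]
    (Φ : G → X → X) (S : Finset G) (δ : ℝ)
    (f : G → X) (hf : ∀ s ∈ S, ∀ g : G, dist (Φ s (f g)) (f (s * g)) < δ) (h : G) :
    ∀ l : List G, (∀ s ∈ l, s ∈ S) → WeakChain Φ S δ (f h) (f (l.prod * h)) := by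
  intro l
  induction l with
  | nil =>
      intro _
      exact ⟨0, fun _ => f h, fun _ => 1, rfl, by simp, by simp⟩
  | cons s t ih =>
      intro hl
      have hs : s ∈ S := hl s List.mem_cons_self
      have hchain := ih (fun a ha => hl a (List.mem_cons_of_mem _ ha))
      have hstep : dist (Φ s (f (t.prod * h))) (f ((s :: t).prod * h)) < δ := by
        have := hf s hs (t.prod * h)
        simpa [mul_assoc] using this
      exact hchain.snoc hs hstep

lemma exists_word {G : Type*} [Group G] (S : Finset G)
    (hSsymm : ∀ s ∈ S, s⁻¹ ∈ S)
    (hSgen : Subgroup.closure (S : Set G) = ⊤) (g : G) :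
    ∃ l : List G, (∀ s ∈ l, s ∈ S) ∧ l.prod = g := by
  have hg : g ∈ Subgroup.closure (S : Set G) := by rw [hSgen]; trivial
  induction hg using Subgroup.closure_induction with
  | mem s hs => exact ⟨[s], by simpa using hs, by simp⟩
  | one => exact ⟨[], by simp, by simp⟩
  | mul a b _ _ iha ihb =>
      obtain ⟨la, hla, hpa⟩ := iha
      obtain ⟨lb, hlb, hpb⟩ := ihb
      refine ⟨la ++ lb, ?_, by simp [hpa, hpb]⟩
      intro s hs
      rcases List.mem_append.mp hs with h | h
      exacts [hla s h, hlb s h]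
  | inv a _ iha =>
      obtain ⟨la, hla, hpa⟩ := iha
      refine ⟨(la.map Inv.inv).reverse, ?_, ?_⟩
      · intro s hs
        simp only [List.mem_reverse, List.mem_map] at hs
        obtain ⟨t, ht, rfl⟩ := hs
        exact hSsymm t (hla t ht)
      · rw [← hpa, List.prod_inv_reverse]

/-- If `x R^S_δ y`, then there are weak `δ`-chains of `Φ` from `x` to `y` and
from `y` to `x`. -/
theorem weakChain_of_relDelta
    {G X : Type*} [Group G] [MetricSpace X]
    (Φ : G → X → X) (S : Finset G)
    (hSsymm : ∀ s ∈ S, s⁻¹ ∈ S)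
    (hSgen : Subgroup.closure (S : Set G) = ⊤)
    (hΦ1 : ∀ x : X, Φ 1 x = x)
    (hΦmul : ∀ g h : G, ∀ x : X, Φ (g * h) x = Φ g (Φ h x))
    (hΦuc : ∀ g : G, UniformContinuous (Φ g))
    (δ : ℝ) (hδ : 0 < δ) (x y : X)
    (hrel : RelDelta Φ S δ x y) :
    WeakChain Φ S δ x y ∧ WeakChain Φ S δ y x := by
  obtain ⟨f, hf, h, k, _, hfh, hfk⟩ := hrel
  constructor
  · obtain ⟨l, hl, hprod⟩ := exists_word S hSsymm hSgen (k * h⁻¹)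
    have := weakChain_of_list Φ S δ f hf h l hl
    rw [hprod, inv_mul_cancel_right, hfh, hfk] at this
    exact this
  · obtain ⟨l, hl, hprod⟩ := exists_word S hSsymm hSgen (h * k⁻¹)
    have := weakChain_of_list Φ S δ f hf k l hl
    rw [hprod, inv_mul_cancel_right, hfh, hfk] at this
    exact this
end

section
/- Let G be a group with a finite symmetric generating set S and let Φ be a uniformly continuous action of G on a metric space (X,d). For each x ∈ X, the set B[x] = {y ∈ X : y WR^S x} (the equivalence class of x under the weak relation WR^S) is closed in X and Φ-invariant, i.e. Φ_g(B[x]) ⊆ B[x] for all g ∈ G. -/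
def WeakRel {G X : Type*} [Group G] [MetricSpace X]
    (Φ : G → X → X) (S : Finset G) (x y : X) : Prop :=
  ∀ δ : ℝ, 0 < δ → WeakChain Φ S δ x y ∧ WeakChain Φ S δ y x

section Aux
variable {G X : Type*} [Group G] [MetricSpace X]
variable (Φ : G → X → X) (S : Finset G)

lemma weakChain_refl (δ : ℝ) (y : X) : WeakChain Φ S δ y y :=
  ⟨0, fun _ => y, fun _ => 1, rfl, rfl, fun i hi => absurd hi (Nat.not_lt_zero i)⟩

lemma weakChain_trans {δ : ℝ} {a b c : X} (h1 : WeakChain Φ S δ a b)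
    (h2 : WeakChain Φ S δ b c) : WeakChain Φ S δ a c := by
  obtain ⟨k, xs, ss, hx0, hxk, hstep⟩ := h1
  obtain ⟨l, ys, ts, hy0, hyl, htstep⟩ := h2
  refine ⟨k + l, fun i => if i < k then xs i else ys (i - k),
    fun i => if i < k then ss i else ts (i - k), ?_, ?_, ?_⟩
  · by_cases h : 0 < k
    · simp [h, hx0]
    · have hk : k = 0 := by omega
      subst hk
      simpa [hy0] using (hx0 ▸ hxk).symm
  · have : ¬ (k + l < k) := by omega
    simp [this, hyl]
  · intro i hi
    by_cases h : i < k
    · by_cases h1 : i + 1 < k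
      · simpa [h, h1] using hstep i h
      · have hik : i + 1 = k := by omega
        have := hstep i h
        simp only [h, if_pos, h1, if_neg, hik]
        simpa [Nat.sub_self, hy0, ← hxk, hik] using this
    · have hl : i - k < l := by omega
      have h1 : ¬ i + 1 < k := by omega
      have h2 : i + 1 - k = (i - k) + 1 := by omega
      simpa [h, h1, h2] using htstep (i - k) hl

lemma weakRel_refl (y : X) : WeakRel Φ S y y :=
  fun δ hδ => ⟨weakChain_refl Φ S δ y, weakChain_refl Φ S δ y⟩

lemma weakRel_trans {a b c : X} (h1 : WeakRel Φ S a b) (h2 : WeakRel Φ S b c) :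
    WeakRel Φ S a c := fun δ hδ =>
  ⟨weakChain_trans Φ S (h1 δ hδ).1 (h2 δ hδ).1,
   weakChain_trans Φ S (h2 δ hδ).2 (h1 δ hδ).2⟩

lemma weakRel_symm {a b : X} (h : WeakRel Φ S a b) : WeakRel Φ S b a :=
  fun δ hδ => ⟨(h δ hδ).2, (h δ hδ).1⟩

lemma weakChain_of_dist {s : G} (hs : s ∈ S) (hs' : s⁻¹ ∈ S)
    (hΦ1 : ∀ x : X, Φ 1 x = x)
    (hΦmul : ∀ g h : G, ∀ x : X, Φ (g * h) x = Φ g (Φ h x))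
    {δ : ℝ} {y y' : X} (h : dist y y' < δ) : WeakChain Φ S δ y y' := by
  have hδ : 0 < δ := lt_of_le_of_lt dist_nonneg h
  refine ⟨2, fun i => if i = 0 then y else if i = 1 then Φ s y else y',
    fun i => if i = 0 then s else s⁻¹, rfl, rfl, ?_⟩
  intro i hi
  interval_cases i
  · simpa using ⟨hs, hδ⟩
  · refine ⟨by simpa using hs', ?_⟩
    have : Φ s⁻¹ (Φ s y) = y := by
      rw [← hΦmul, inv_mul_cancel, hΦ1]
    simpa [this] using h

lemma weakRel_phi (hSsymm : ∀ s ∈ S, s⁻¹ ∈ S)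
    (hSgen : Subgroup.closure (S : Set G) = ⊤)
    (hΦ1 : ∀ x : X, Φ 1 x = x)
    (hΦmul : ∀ g h : G, ∀ x : X, Φ (g * h) x = Φ g (Φ h x))
    (g : G) : ∀ y : X, WeakRel Φ S (Φ g y) y := by
  have hg : g ∈ Subgroup.closure (S : Set G) := by rw [hSgen]; trivial
  induction hg using Subgroup.closure_induction with
  | mem s hs =>
      intro y δ hδ
      have hs' : s⁻¹ ∈ S := hSsymm s hs
      constructor
      · refine ⟨1, fun i => if i = 0 then Φ s y else y, fun _ => s⁻¹, rfl, rfl, ?_⟩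
        intro i hi
        have : i = 0 := by omega
        subst this
        refine ⟨hs', ?_⟩
        have : Φ s⁻¹ (Φ s y) = y := by rw [← hΦmul, inv_mul_cancel, hΦ1]
        simpa [this] using hδ
      · refine ⟨1, fun i => if i = 0 then y else Φ s y, fun _ => s, rfl, rfl, ?_⟩
        intro i hi
        have : i = 0 := by omega
        subst this
        simpa using ⟨hs, hδ⟩
  | one => intro y; simpa [hΦ1] using weakRel_refl Φ S y
  | mul a b _ _ ha hb =>
      intro y
      have h1 : WeakRel Φ S (Φ a (Φ b y)) (Φ b y) := ha (Φ b y)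
      have h2 : WeakRel Φ S (Φ b y) y := hb y
      have := weakRel_trans Φ S h1 h2
      simpa [hΦmul] using this
  | inv a _ ha =>
      intro y
      have h1 : WeakRel Φ S (Φ a (Φ a⁻¹ y)) (Φ a⁻¹ y) := ha (Φ a⁻¹ y)
      have : Φ a (Φ a⁻¹ y) = y := by rw [← hΦmul, mul_inv_cancel, hΦ1]
      rw [this] at h1
      exact weakRel_symm Φ S h1

end Aux

/-- Each equivalence class `B[x] = {y : y WR^S x}` of the weak relation is
closed and `Φ`-invariant. -/
theorem weakRel_class_isClosed_and_invariant
    {G X : Type*} [Group G] [MetricSpace X]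
    (Φ : G → X → X) (S : Finset G)
    (hSsymm : ∀ s ∈ S, s⁻¹ ∈ S)
    (hSgen : Subgroup.closure (S : Set G) = ⊤)
    (hΦ1 : ∀ x : X, Φ 1 x = x)
    (hΦmul : ∀ g h : G, ∀ x : X, Φ (g * h) x = Φ g (Φ h x))
    (hΦuc : ∀ g : G, UniformContinuous (Φ g))
    (x : X) :
    IsClosed {y : X | WeakRel Φ S y x} ∧
      ∀ g : G, Φ g '' {y : X | WeakRel Φ S y x} ⊆ {y : X | WeakRel Φ S y x} := by
  constructor
  · rcases S.eq_empty_or_nonempty with hS | ⟨s, hs⟩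
    · have : {y : X | WeakRel Φ S y x} = {x} := by
        ext y
        simp only [Set.mem_setOf_eq, Set.mem_singleton_iff]
        constructor
        · intro h
          obtain ⟨k, xs, ss, h0, hk, hstep⟩ := (h 1 one_pos).1
          have hk0 : k = 0 := by
            by_contra hk0
            have := (hstep 0 (by omega)).1
            simp [hS] at this
          subst hk0
          rw [← h0, hk]
        · rintro rfl; exact weakRel_refl Φ S _
      rw [this]; exact isClosed_singleton
    · have hs' : s⁻¹ ∈ S := hSsymm s hs
      rw [← closure_eq_iff_isClosed]
      apply Set.Subset.antisymm _ subset_closure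
      intro y hy δ hδ
      obtain ⟨y', hy', hd⟩ := Metric.mem_closure_iff.mp hy δ hδ
      constructor
      · exact weakChain_trans Φ S
          (weakChain_of_dist Φ S hs hs' hΦ1 hΦmul hd) ((hy' δ hδ).1)
      · exact weakChain_trans Φ S ((hy' δ hδ).2)
          (weakChain_of_dist Φ S hs hs' hΦ1 hΦmul (by rwa [dist_comm]))
  · rintro g z ⟨y, hy, rfl⟩
    exact weakRel_trans Φ S (weakRel_phi Φ S hSsymm hSgen hΦ1 hΦmul g y) hy
end
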